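/- arXiv:2106.13034 — 4 statements merged into one kernel-verified Lean document; each statement's English description precedes it below -/
import Mathlib

section
/- Invariance of the CPD condition number under Tucker compression (Theorem 5.1 for canonical polyadic decomposition). Fix D ≥ 1, R ≥ 1 and dimensions 1 ≤ m_d ≤ n_d. For r = 1,…,R let u_d^r ∈ ℝ^{m_d} be unit vectors, and let Q_d ∈ ℝ^{n_d×m_d} have orthonormal columns (so each Q_du_d^r is a unit vector in ℝ^{n_d}). Let T_G be the matrix whose columns are, for r = 1,…,R: the vector u₁^r⊗⋯⊗u_D^r, together with, for each d = 1,…,D and each i = 1,…,m_d−1, the vector u₁^r⊗⋯⊗u_{d−1}^r⊗(W_d^r e_i)⊗u_{d+1}^r⊗⋯⊗u_D^r, where W_d^r ∈ ℝ^{m_d×(m_d−1)} is any matrix with orthonormal columns satisfying (u_d^r)ᵀW_d^r = 0. Let T_A be the analogous matrix built from the unit vectors Q_du_d^r ∈ ℝ^{n_d} with any matrices Z_d^r ∈ ℝ^{n_d×(n_d−1)} having orthonormal columns orthogonal to Q_du_d^r. Then σ_min(T_A) = σ_min(T_G); that is, the condition number κ^CPD := 1/σ_min(Terracini matrix) of a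 canonical polyadic decomposition is invariant under Tucker compression by (Q₁,…,Q_D). -/
open scoped BigOperators
open Matrix

noncomputable section

/-- Euclidean norm of a finitely-indexed real vector. -/
def vecEnorm {ι : Type*} [Fintype ι] (x : ι → ℝ) : ℝ := Real.sqrt (∑ i, x i ^ 2)

/-- Smallest singular value of a real matrix, as the infimum of `‖M x‖` over
Euclidean-unit vectors `x`. -/
def sigmaMin {ι κ : Type*} [Fintype ι] [Fintype κ] (M : Matrix ι κ ℝ) : ℝ :=
  sInf { r | ∃ x : κ → ℝ, vecEnorm x = 1 ∧ r = vecEnorm (M.mulVec x) }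

/-- The Terracini block of a rank-one term `u₁ ⊗ ⋯ ⊗ u_D`: one column
`u₁⊗⋯⊗u_D` plus, for each mode `d` and each column `i` of the orthonormal
complement `W_d` of `u_d`, the column `u₁⊗⋯⊗(W_d e_i)⊗⋯⊗u_D`. -/
def cpdTerracini {D : ℕ} {m : Fin D → ℕ} (u : ∀ d, Fin (m d) → ℝ)
    (W : ∀ d, Matrix (Fin (m d)) (Fin (m d - 1)) ℝ) :
    Matrix (∀ d, Fin (m d)) (Unit ⊕ Σ d : Fin D, Fin (m d - 1)) ℝ :=
  Matrix.of fun a col =>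
    Sum.elim
      (fun _ => ∏ d, u d (a d))
      (fun p => ∏ d, (Function.update u p.1 (fun b => W p.1 b p.2)) d (a d))
      col

/-- Concatenation over `r = 1,…,R` of the rank-one Terracini blocks: the Terracini
matrix of a canonical polyadic decomposition. -/
def cpdTerraciniConcat {D R : ℕ} {m : Fin D → ℕ}
    (u : ∀ _ : Fin R, ∀ d, Fin (m d) → ℝ)
    (W : ∀ _ : Fin R, ∀ d, Matrix (Fin (m d)) (Fin (m d - 1)) ℝ) :
    Matrix (∀ d, Fin (m d)) (Fin R × (Unit ⊕ Σ d : Fin D, Fin (m d - 1))) ℝ :=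
  Matrix.of fun a p => cpdTerracini (u p.1) (W p.1) a p.2

namespace TuckerAux

/-! ### Generic euclidean-norm and `sigmaMin` facts -/

lemma dot_self_nonneg {ι : Type*} [Fintype ι] (x : ι → ℝ) : 0 ≤ x ⬝ᵥ x :=
  Finset.sum_nonneg fun i _ => mul_self_nonneg (x i)

lemma vecEnorm_eq_sqrt {ι : Type*} [Fintype ι] (x : ι → ℝ) :
    vecEnorm x = Real.sqrt (x ⬝ᵥ x) := by
  unfold vecEnorm dotProduct
  congr 1
  exact Finset.sum_congr rfl fun i _ => sq (x i)

lemma vecEnorm_nonneg {ι : Type*} [Fintype ι] (x : ι → ℝ) : 0 ≤ vecEnorm x :=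
  Real.sqrt_nonneg _

lemma sq_vecEnorm {ι : Type*} [Fintype ι] (x : ι → ℝ) : vecEnorm x ^ 2 = x ⬝ᵥ x := by
  rw [vecEnorm_eq_sqrt, Real.sq_sqrt (dot_self_nonneg x)]

lemma dot_of_unit {ι : Type*} [Fintype ι] {x : ι → ℝ} (h : vecEnorm x = 1) :
    x ⬝ᵥ x = 1 := by rw [← sq_vecEnorm, h]; norm_num

variable {ι κ : Type*} [Fintype ι] [Fintype κ]

lemma sigma_bddBelow (M : Matrix ι κ ℝ) :
    BddBelow { r | ∃ x : κ → ℝ, vecEnorm x = 1 ∧ r = vecEnorm (M.mulVec x) } :=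
  ⟨0, fun _ ⟨_, _, hr⟩ => hr ▸ vecEnorm_nonneg _⟩

lemma sigmaMin_nonneg (M : Matrix ι κ ℝ) : 0 ≤ sigmaMin M :=
  Real.sInf_nonneg fun _ ⟨_, _, hr⟩ => hr ▸ vecEnorm_nonneg _

lemma sigmaMin_le (M : Matrix ι κ ℝ) {x : κ → ℝ} (h : vecEnorm x = 1) :
    sigmaMin M ≤ vecEnorm (M.mulVec x) :=
  csInf_le (sigma_bddBelow M) ⟨x, h, rfl⟩

lemma vecEnorm_smul (c : ℝ) (x : κ → ℝ) : vecEnorm (c • x) = |c| * vecEnorm x := by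
  unfold vecEnorm
  rw [show ∑ i, (c • x) i ^ 2 = c ^ 2 * ∑ i, x i ^ 2 from by
    rw [Finset.mul_sum]; exact Finset.sum_congr rfl fun i _ => by simp [mul_pow]]
  rw [Real.sqrt_mul (sq_nonneg c), Real.sqrt_sq_eq_abs]

lemma sigmaMin_mul_le (M : Matrix ι κ ℝ) (x : κ → ℝ) :
    sigmaMin M * vecEnorm x ≤ vecEnorm (M.mulVec x) := by
  rcases eq_or_ne (vecEnorm x) 0 with h0 | h0
  · have hx : x = 0 := by
      have hsum : ∑ i, x i ^ 2 = 0 := by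
        have := congrArg (fun t => t ^ 2) h0
        simpa [vecEnorm, Real.sq_sqrt (Finset.sum_nonneg fun i _ => sq_nonneg (x i))] using this
      funext i
      exact pow_eq_zero_iff (n := 2) (by norm_num) |>.mp
        ((Finset.sum_eq_zero_iff_of_nonneg (fun i _ => sq_nonneg (x i))).mp hsum i
          (Finset.mem_univ i))
    rw [h0, hx, mul_zero, Matrix.mulVec_zero]
    have : vecEnorm (0 : ι → ℝ) = 0 := by simp [vecEnorm]
    rw [this]
  · have hpos : 0 < vecEnorm x := lt_of_le_of_ne (vecEnorm_nonneg x) (Ne.symm h0)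
    have h1 : vecEnorm ((vecEnorm x)⁻¹ • x) = 1 := by
      rw [vecEnorm_smul, abs_of_pos (inv_pos.mpr hpos), inv_mul_cancel₀ h0]
    have h2 := sigmaMin_le M h1
    rw [Matrix.mulVec_smul, vecEnorm_smul, abs_of_pos (inv_pos.mpr hpos)] at h2
    calc sigmaMin M * vecEnorm x ≤ ((vecEnorm x)⁻¹ * vecEnorm (M.mulVec x)) * vecEnorm x :=
          mul_le_mul_of_nonneg_right h2 (le_of_lt hpos)
      _ = vecEnorm (M.mulVec x) := by field_simp

lemma sigmaMin_sq_le (M : Matrix ι κ ℝ) (x : κ → ℝ) :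
    sigmaMin M ^ 2 * (x ⬝ᵥ x) ≤ (M.mulVec x) ⬝ᵥ (M.mulVec x) := by
  have h := sigmaMin_mul_le M x
  have h2 : (sigmaMin M * vecEnorm x) ^ 2 ≤ vecEnorm (M.mulVec x) ^ 2 :=
    pow_le_pow_left₀ (mul_nonneg (sigmaMin_nonneg M) (vecEnorm_nonneg x)) h 2
  rw [mul_pow, sq_vecEnorm, sq_vecEnorm] at h2
  exact h2

lemma vecEnorm_single [DecidableEq κ] (p₀ : κ) :
    vecEnorm (fun p => if p = p₀ then (1 : ℝ) else 0) = 1 := by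
  unfold vecEnorm
  rw [show (∑ p, (if p = p₀ then (1:ℝ) else 0) ^ 2) = 1 from by
    rw [Finset.sum_eq_single p₀] <;> simp +contextual]
  exact Real.sqrt_one

/-! ### rank-one tensors -/

variable {D R : ℕ} {m : Fin D → ℕ}

def tp (f : ∀ d, Fin (m d) → ℝ) : (∀ d, Fin (m d)) → ℝ := fun a => ∏ d, f d (a d)

lemma tp_dot (f g : ∀ d, Fin (m d) → ℝ) :
    tp f ⬝ᵥ tp g = ∏ d, (f d ⬝ᵥ g d) := by
  unfold tp dotProduct
  rw [Fintype.prod_sum (fun d b => f d b * g d b)]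
  exact Finset.sum_congr rfl fun a _ => (Finset.prod_mul_distrib).symm

lemma tp_update_apply (f : ∀ d, Fin (m d) → ℝ) (d : Fin D) (c : Fin (m d) → ℝ)
    (A : ∀ d, Fin (m d)) :
    tp (Function.update f d c) A = c (A d) * ∏ d' ∈ Finset.univ.erase d, f d' (A d') := by
  have h : (fun d' => Function.update f d c d' (A d'))
      = Function.update (fun d' => f d' (A d')) d (c (A d)) := by
    funext d'
    rcases eq_or_ne d' d with rfl | hne
    · simp
    · simp [Function.update_of_ne hne]
  show ∏ d', Function.update f d c d' (A d') = _
  rw [show (∏ d', Function.update f d c d' (A d'))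
      = ∏ d', Function.update (fun d' => f d' (A d')) d (c (A d)) d' from by rw [h]]
  rw [Finset.prod_update_of_mem (Finset.mem_univ d), Finset.erase_eq]

lemma tp_split (f : ∀ d, Fin (m d) → ℝ) (d : Fin D) (A : ∀ d, Fin (m d)) :
    tp f A = f d (A d) * ∏ d' ∈ Finset.univ.erase d, f d' (A d') := by
  conv_lhs => rw [← Function.update_eq_self d f]
  rw [tp_update_apply]

lemma update_dot (f g : ∀ d, Fin (m d) → ℝ) (d : Fin D) (c e : Fin (m d) → ℝ) :
    (∏ d', ((Function.update f d c) d' ⬝ᵥ (Function.update g d e) d'))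
      = (c ⬝ᵥ e) * ∏ d' ∈ Finset.univ.erase d, (f d' ⬝ᵥ g d') := by
  have h : (fun d' => ((Function.update f d c) d' ⬝ᵥ (Function.update g d e) d'))
      = Function.update (fun d' => f d' ⬝ᵥ g d') d (c ⬝ᵥ e) := by
    funext d'
    rcases eq_or_ne d' d with rfl | hne
    · simp
    · simp [Function.update_of_ne hne]
  rw [show (∏ d', ((Function.update f d c) d' ⬝ᵥ (Function.update g d e) d'))
      = ∏ d', Function.update (fun d' => f d' ⬝ᵥ g d') d (c ⬝ᵥ e) d' from by rw [h]]
  rw [Finset.prod_update_of_mem (Finset.mem_univ d), Finset.erase_eq]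

lemma update_lift {n : Fin D → ℕ} (Q : ∀ d, Matrix (Fin (n d)) (Fin (m d)) ℝ)
    (f : ∀ d, Fin (m d) → ℝ) (d : Fin D) (c : Fin (m d) → ℝ) :
    (fun d' => (Q d').mulVec ((Function.update f d c) d'))
      = Function.update (fun d' => (Q d').mulVec (f d')) d ((Q d).mulVec c) := by
  funext d'
  rcases eq_or_ne d' d with rfl | hne
  · simp
  · simp [Function.update_of_ne hne]

/-! ### completeness of orthonormal systems -/

lemma complete {N : ℕ} {ι : Type*} [Fintype ι] [DecidableEq ι]
    (B : Matrix (Fin N) ι ℝ) (h : Bᵀ * B = 1) (hc : Fintype.card ι = N)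
    (a : Fin N → ℝ) :
    ∑ c, ((fun b => B b c) ⬝ᵥ a) • (fun b => B b c) = a := by
  have e : ι ≃ Fin N := Fintype.equivFinOfCardEq hc
  set B' : Matrix (Fin N) (Fin N) ℝ := B.submatrix id e.symm with hB'
  have h1 : B'ᵀ * B' = 1 := by
    ext i j
    have := congrFun (congrFun h (e.symm i)) (e.symm j)
    simp only [Matrix.mul_apply, Matrix.transpose_apply, hB', Matrix.submatrix_apply,
      id_eq] at this ⊢
    rw [this, Matrix.one_apply, Matrix.one_apply]
    simp
  have h2 : B' * B'ᵀ = 1 := mul_eq_one_comm.mp h1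
  have h3 : B * Bᵀ = 1 := by
    ext i j
    have := congrFun (congrFun h2 i) j
    simp only [Matrix.mul_apply, Matrix.transpose_apply, hB', Matrix.submatrix_apply,
      id_eq] at this
    rw [Matrix.mul_apply]
    rw [← Equiv.sum_comp e.symm (fun c => B i c * Bᵀ c j)]
    simpa [Matrix.transpose_apply] using this
  have key : ∀ b, ∑ c : ι, (∑ b', B b' c * a b') * B b c = a b := by
    intro b
    have := congrFun (congrArg (fun M => M.mulVec a) h3) b
    simp only [Matrix.one_mulVec] at this
    rw [← this]
    simp only [Matrix.mul_apply, Matrix.mulVec, dotProduct, Matrix.transpose_apply,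
      Finset.sum_mul, Finset.mul_sum]
    rw [Finset.sum_comm]
    exact Finset.sum_congr rfl fun c _ => Finset.sum_congr rfl fun b' _ => by ring
  funext b
  simp only [Finset.sum_apply, Pi.smul_apply, smul_eq_mul, dotProduct]
  exact key b

lemma complete_pair {N K : ℕ} (hK : K + 1 = N) (v : Fin N → ℝ) (hv : v ⬝ᵥ v = 1)
    (C : Matrix (Fin N) (Fin K) ℝ) (hC : Cᵀ * C = 1) (hvC : Matrix.vecMul v C = 0)
    (a : Fin N → ℝ) :
    (v ⬝ᵥ a) • v + ∑ i, ((fun b => C b i) ⬝ᵥ a) • (fun b => C b i) = a := by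
  classical
  set B : Matrix (Fin N) (Fin K ⊕ Unit) ℝ :=
    Matrix.of (fun b c => Sum.elim (fun i => C b i) (fun _ => v b) c) with hB
  have hBo : Bᵀ * B = 1 := by
    ext c c'
    rcases c with i | _ <;> rcases c' with j | _ <;>
      simp only [Matrix.mul_apply, Matrix.transpose_apply, hB, Matrix.of_apply,
        Sum.elim_inl, Sum.elim_inr, Matrix.one_apply]
    · have := congrFun (congrFun hC i) j
      simp only [Matrix.mul_apply, Matrix.transpose_apply, Matrix.one_apply] at this
      rw [this]
      simp [Sum.inl.injEq]
    · have := congrFun hvC i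
      simp only [Matrix.vecMul, dotProduct, Pi.zero_apply] at this
      rw [show (∑ b, C b i * v b) = ∑ b, v b * C b i from
        Finset.sum_congr rfl fun b _ => mul_comm _ _, this]
      simp
    · have := congrFun hvC j
      simp only [Matrix.vecMul, dotProduct, Pi.zero_apply] at this
      rw [show (∑ b, v b * C b j) = ∑ b, v b * C b j from rfl, this]
      simp
    · simpa [dotProduct] using hv
  have hcard : Fintype.card (Fin K ⊕ Unit) = N := by
    simp [Fintype.card_sum, hK]
  have h2 := complete B hBo hcard a
  rw [Fintype.sum_sum_type] at h2
  simp only [hB, Matrix.of_apply, Sum.elim_inl, Sum.elim_inr, Fintype.sum_unique] at h2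
  rw [add_comm]
  exact h2

/-! ### the Terracini matrix as combination of rank-one tensors -/

lemma sum_colindex {E : Type*} [AddCommMonoid E]
    (g : (Fin R × (Unit ⊕ Σ d : Fin D, Fin (m d - 1))) → E) :
    ∑ p, g p = ∑ r, (g (r, Sum.inl ()) + ∑ d, ∑ i, g (r, Sum.inr ⟨d, i⟩)) := by
  rw [Fintype.sum_prod_type]
  refine Finset.sum_congr rfl fun r _ => ?_
  rw [Fintype.sum_sum_type]
  congr 1
  · simp
  · rw [← Finset.univ_sigma_univ, Finset.sum_sigma]

lemma TmulVec (u : ∀ _ : Fin R, ∀ d, Fin (m d) → ℝ)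
    (W : ∀ _ : Fin R, ∀ d, Matrix (Fin (m d)) (Fin (m d - 1)) ℝ)
    (x : (Fin R × (Unit ⊕ Σ d : Fin D, Fin (m d - 1))) → ℝ) (a : ∀ d, Fin (m d)) :
    (cpdTerraciniConcat u W).mulVec x a
      = ∑ r, (x (r, Sum.inl ()) * tp (u r) a
          + ∑ d, ∑ i, x (r, Sum.inr ⟨d, i⟩)
              * tp (Function.update (u r) d (fun b => W r d b i)) a) := by
  show (∑ p, cpdTerraciniConcat u W a p * x p) = _
  rw [sum_colindex (fun p => cpdTerraciniConcat u W a p * x p)]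
  refine Finset.sum_congr rfl fun r _ => ?_
  congr 1
  · rw [mul_comm]; rfl
  · refine Finset.sum_congr rfl fun d _ => Finset.sum_congr rfl fun i _ => ?_
    rw [mul_comm]; rfl

/-- the slot-vector family of the columns of the Terracini matrix -/
def colfam (u : ∀ _ : Fin R, ∀ d, Fin (m d) → ℝ)
    (W : ∀ _ : Fin R, ∀ d, Matrix (Fin (m d)) (Fin (m d - 1)) ℝ)
    (p : Fin R × (Unit ⊕ Σ d : Fin D, Fin (m d - 1))) : ∀ d, Fin (m d) → ℝ :=
  Sum.elim (fun _ => u p.1)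
    (fun q => Function.update (u p.1) q.1 (fun b => W p.1 q.1 b q.2)) p.2

lemma TmulVec_colfam (u : ∀ _ : Fin R, ∀ d, Fin (m d) → ℝ)
    (W : ∀ _ : Fin R, ∀ d, Matrix (Fin (m d)) (Fin (m d - 1)) ℝ)
    (x : (Fin R × (Unit ⊕ Σ d : Fin D, Fin (m d - 1))) → ℝ) :
    (cpdTerraciniConcat u W).mulVec x = fun a => ∑ p, x p * tp (colfam u W p) a := by
  funext a
  rw [TmulVec, sum_colindex (fun p => x p * tp (colfam u W p) a)]
  rfl

/-- bilinear expansion of the dot product of two combinations of rank-one tensors -/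
lemma dot_expand {ι ι' : Type*} [Fintype ι] [Fintype ι']
    (c : ι → ℝ) (c' : ι' → ℝ)
    (F : ι → ∀ d, Fin (m d) → ℝ) (F' : ι' → ∀ d, Fin (m d) → ℝ) :
    (fun a => ∑ p, c p * tp (F p) a) ⬝ᵥ (fun a => ∑ q, c' q * tp (F' q) a)
      = ∑ p, ∑ q, c p * c' q * ∏ d, (F p d ⬝ᵥ F' q d) := by
  have h : ∀ a, (∑ p, c p * tp (F p) a) * (∑ q, c' q * tp (F' q) a)
      = ∑ p, ∑ q, c p * c' q * (tp (F p) a * tp (F' q) a) := by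
    intro a
    rw [Finset.sum_mul_sum]
    exact Finset.sum_congr rfl fun p _ => Finset.sum_congr rfl fun q _ => by ring
  show (∑ a, (∑ p, c p * tp (F p) a) * (∑ q, c' q * tp (F' q) a)) = _
  calc (∑ a, (∑ p, c p * tp (F p) a) * (∑ q, c' q * tp (F' q) a))
      = ∑ a, ∑ p, ∑ q, c p * c' q * (tp (F p) a * tp (F' q) a) :=
        Finset.sum_congr rfl fun a _ => h a
    _ = ∑ p, ∑ a, ∑ q, c p * c' q * (tp (F p) a * tp (F' q) a) := Finset.sum_comm
    _ = ∑ p, ∑ q, ∑ a, c p * c' q * (tp (F p) a * tp (F' q) a) :=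
        Finset.sum_congr rfl fun p _ => Finset.sum_comm
    _ = ∑ p, ∑ q, c p * c' q * ∏ d, (F p d ⬝ᵥ F' q d) := by
        refine Finset.sum_congr rfl fun p _ => Finset.sum_congr rfl fun q _ => ?_
        rw [← Finset.mul_sum, ← tp_dot]
        rfl

lemma dot_sum_left {ι κ : Type*} [Fintype ι] [Fintype κ] (f : κ → ι → ℝ) (v : ι → ℝ) :
    (∑ k, f k) ⬝ᵥ v = ∑ k, f k ⬝ᵥ v := by
  simp only [dotProduct, Finset.sum_apply, Finset.sum_mul]
  exact Finset.sum_comm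

lemma dot_sum_right {ι κ : Type*} [Fintype ι] [Fintype κ] (v : ι → ℝ) (f : κ → ι → ℝ) :
    v ⬝ᵥ (∑ k, f k) = ∑ k, v ⬝ᵥ f k := by
  simp only [dotProduct, Finset.sum_apply, Finset.mul_sum]
  exact Finset.sum_comm

lemma mulVec_sum {N M : ℕ} {κ : Type*} [Fintype κ] (Q : Matrix (Fin N) (Fin M) ℝ)
    (f : κ → Fin M → ℝ) : Q.mulVec (∑ k, f k) = ∑ k, Q.mulVec (f k) := by
  rw [← Matrix.mulVecLin_apply, map_sum]
  simp [Matrix.mulVecLin_apply]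

lemma qdot {N M : ℕ} (Q : Matrix (Fin N) (Fin M) ℝ) (hQ : Qᵀ * Q = 1)
    (a b : Fin M → ℝ) : (Q.mulVec a) ⬝ᵥ (Q.mulVec b) = a ⬝ᵥ b := by
  rw [Matrix.dotProduct_mulVec, ← Matrix.mulVec_transpose, Matrix.mulVec_mulVec, hQ,
    Matrix.one_mulVec]

end TuckerAux

open TuckerAux

/-- **Theorem 5.1 for the canonical polyadic decomposition.** The smallest singular value
of the CPD Terracini matrix is invariant under Tucker compression: the Terracini matrix
built from the unit vectors `u_d^r ∈ ℝ^{m_d}` (with complements `W_d^r`) and the one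
built from the expanded unit vectors `Q_d u_d^r ∈ ℝ^{n_d}` (with complements `Z_d^r`)
have the same smallest singular value; hence `κ^CPD = 1/σ_min` is invariant under
Tucker compression by `(Q₁,…,Q_D)`. -/
theorem sigmaMin_cpdTerracini_invariant_under_tucker_compression
    {D R : ℕ} (hD : 1 ≤ D) (hR : 1 ≤ R)
    (m n : Fin D → ℕ) (hm : ∀ d, 1 ≤ m d) (hmn : ∀ d, m d ≤ n d)
    -- the unit vectors `u_d^r`
    (u : ∀ _ : Fin R, ∀ d, Fin (m d) → ℝ)
    (hu : ∀ r d, ∑ b, u r d b ^ 2 = 1)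
    -- the Tucker basis `Q_d`, with orthonormal columns
    (Q : ∀ d, Matrix (Fin (n d)) (Fin (m d)) ℝ)
    (hQ : ∀ d, (Q d)ᵀ * Q d = 1)
    -- orthonormal complements `W_d^r` of `u_d^r` in `ℝ^{m_d}`
    (W : ∀ _ : Fin R, ∀ d, Matrix (Fin (m d)) (Fin (m d - 1)) ℝ)
    (hW : ∀ r d, (W r d)ᵀ * W r d = 1)
    (huW : ∀ r d, Matrix.vecMul (u r d) (W r d) = 0)
    -- orthonormal complements `Z_d^r` of `Q_d u_d^r` in `ℝ^{n_d}`
    (Z : ∀ _ : Fin R, ∀ d, Matrix (Fin (n d)) (Fin (n d - 1)) ℝ)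
    (hZ : ∀ r d, (Z r d)ᵀ * Z r d = 1)
    (hQuZ : ∀ r d, Matrix.vecMul ((Q d).mulVec (u r d)) (Z r d) = 0) :
    sigmaMin (cpdTerraciniConcat (fun r d => (Q d).mulVec (u r d)) Z)
      = sigmaMin (cpdTerraciniConcat u W) := by
  classical
  set TA := cpdTerraciniConcat (fun r d => (Q d).mulVec (u r d)) Z with hTAdef
  set TG := cpdTerraciniConcat u W with hTGdef
  -- basic dot-product facts
  have hudot : ∀ r d, u r d ⬝ᵥ u r d = 1 := fun r d => by
    rw [← hu r d]; exact Finset.sum_congr rfl fun b _ => (sq (u r d b)).symm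
  have hqd : ∀ (d) (a b : Fin (m d) → ℝ),
      ((Q d).mulVec a) ⬝ᵥ ((Q d).mulVec b) = a ⬝ᵥ b := fun d => qdot (Q d) (hQ d)
  have hWdot : ∀ r d i j, ((fun b => W r d b i) ⬝ᵥ (fun b => W r d b j))
      = if i = j then (1:ℝ) else 0 := by
    intro r d i j
    have := congrFun (congrFun (hW r d) i) j
    simp only [Matrix.mul_apply, Matrix.transpose_apply, Matrix.one_apply] at this
    simpa [dotProduct] using this
  have hZdot : ∀ r d j k, ((fun b => Z r d b j) ⬝ᵥ (fun b => Z r d b k))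
      = if j = k then (1:ℝ) else 0 := by
    intro r d j k
    have := congrFun (congrFun (hZ r d) j) k
    simp only [Matrix.mul_apply, Matrix.transpose_apply, Matrix.one_apply] at this
    simpa [dotProduct] using this
  have huWdot : ∀ r d i, (u r d ⬝ᵥ (fun b => W r d b i)) = 0 := by
    intro r d i
    have := congrFun (huW r d) i
    simpa [Matrix.vecMul, dotProduct] using this
  have hQuZdot : ∀ r d j, (((Q d).mulVec (u r d)) ⬝ᵥ (fun b => Z r d b j)) = 0 := by
    intro r d j
    have := congrFun (hQuZ r d) j
    simpa [Matrix.vecMul, dotProduct] using this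
  have hvdot : ∀ r d, ((Q d).mulVec (u r d)) ⬝ᵥ ((Q d).mulVec (u r d)) = 1 := fun r d => by
    rw [hqd]; exact hudot r d
  have compW : ∀ r d (a : Fin (m d) → ℝ),
      (u r d ⬝ᵥ a) • u r d
        + ∑ i, ((fun b => W r d b i) ⬝ᵥ a) • (fun b => W r d b i) = a :=
    fun r d => complete_pair (Nat.sub_add_cancel (hm d)) (u r d) (hudot r d)
      (W r d) (hW r d) (huW r d)
  have compZ : ∀ r d (a : Fin (n d) → ℝ),
      (((Q d).mulVec (u r d)) ⬝ᵥ a) • ((Q d).mulVec (u r d))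
        + ∑ j, ((fun b => Z r d b j) ⬝ᵥ a) • (fun b => Z r d b j) = a :=
    fun r d => complete_pair (Nat.sub_add_cancel (le_trans (hm d) (hmn d)))
      ((Q d).mulVec (u r d)) (hvdot r d) (Z r d) (hZ r d) (hQuZ r d)
  -- ============ direction ≤ ============
  have hle : sigmaMin TA ≤ sigmaMin TG := by
    have hsub : { v | ∃ x, vecEnorm x = 1 ∧ v = vecEnorm (TG.mulVec x) }
        ⊆ { v | ∃ x', vecEnorm x' = 1 ∧ v = vecEnorm (TA.mulVec x') } := by
      rintro v ⟨x, hx, rfl⟩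
      set s : ∀ (_ : Fin R) (d : Fin D), Fin (n d) → ℝ :=
        fun r d => ∑ i, x (r, Sum.inr ⟨d, i⟩) • (Q d).mulVec (fun b => W r d b i) with hsdef
      set x' : (Fin R × (Unit ⊕ Σ d : Fin D, Fin (n d - 1))) → ℝ :=
        fun p => Sum.elim (fun _ => x (p.1, Sum.inl ()))
          (fun q => (fun b => Z p.1 q.1 b q.2) ⬝ᵥ s p.1 q.1) p.2 with hx'def
      have hQus : ∀ r d, ((Q d).mulVec (u r d)) ⬝ᵥ s r d = 0 := by
        intro r d
        rw [show s r d = ∑ i, x (r, Sum.inr ⟨d, i⟩) • (Q d).mulVec (fun b => W r d b i)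
            from rfl, dot_sum_right]
        simp only [dotProduct_smul, smul_eq_mul, hqd, huWdot, mul_zero,
          Finset.sum_const_zero]
      have hZs : ∀ r d,
          (∑ j, ((fun b => Z r d b j) ⬝ᵥ s r d) • (fun b => Z r d b j)) = s r d := by
        intro r d
        have := compZ r d (s r d)
        rwa [hQus r d, zero_smul, zero_add] at this
      have hss : ∀ r d, s r d ⬝ᵥ s r d
          = ∑ i, x (r, Sum.inr ⟨d, i⟩) * x (r, Sum.inr ⟨d, i⟩) := by
        intro r d
        rw [show s r d = ∑ i, x (r, Sum.inr ⟨d, i⟩) • (Q d).mulVec (fun b => W r d b i)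
            from rfl, dot_sum_left]
        simp only [smul_dotProduct, dot_sum_right, dotProduct_smul, smul_eq_mul, hqd, hWdot]
        simp [mul_ite, mul_one, mul_zero, Finset.sum_ite_eq]
      have hZss : ∀ r d, (∑ j, ((fun b => Z r d b j) ⬝ᵥ s r d) ^ 2) = s r d ⬝ᵥ s r d := by
        intro r d
        have h0 := congrArg (fun t => t ⬝ᵥ s r d) (hZs r d)
        simp only [dot_sum_left, smul_dotProduct, smul_eq_mul] at h0
        rw [← h0]
        exact Finset.sum_congr rfl fun j _ => (sq _)
      have henx' : vecEnorm x' = 1 := by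
        rw [← hx]
        unfold vecEnorm
        congr 1
        rw [sum_colindex (fun p => x' p ^ 2), sum_colindex (fun p => x p ^ 2)]
        refine Finset.sum_congr rfl fun r _ => ?_
        congr 1
        refine Finset.sum_congr rfl fun d _ => ?_
        have h1 : (∑ j, x' (r, Sum.inr ⟨d, j⟩) ^ 2)
            = ∑ j, ((fun b => Z r d b j) ⬝ᵥ s r d) ^ 2 := rfl
        rw [h1, hZss r d, hss r d]
        exact Finset.sum_congr rfl fun i _ => (sq _).symm
      refine ⟨x', henx', ?_⟩
      have hAx : TA.mulVec x'
          = fun a => ∑ p, x p * tp (fun d => (Q d).mulVec (colfam u W p d)) a := by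
        funext a
        rw [hTAdef, TmulVec,
          sum_colindex (fun p => x p * tp (fun d => (Q d).mulVec (colfam u W p d)) a)]
        refine Finset.sum_congr rfl fun r _ => ?_
        congr 1
        refine Finset.sum_congr rfl fun d _ => ?_
        have hLj : ∀ j : Fin (n d - 1),
            tp (Function.update (fun d0 => (Q d0).mulVec (u r d0)) d
              (fun b => Z r d b j)) a
              = Z r d (a d) j * ∏ d' ∈ Finset.univ.erase d, (Q d').mulVec (u r d') (a d') :=
          fun j => tp_update_apply _ _ _ _
        have hRi : ∀ i : Fin (m d - 1),
            tp (fun d' => (Q d').mulVec (colfam u W (r, Sum.inr ⟨d, i⟩) d')) a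
              = (Q d).mulVec (fun b => W r d b i) (a d)
                  * ∏ d' ∈ Finset.univ.erase d, (Q d').mulVec (u r d') (a d') := by
          intro i
          rw [show (fun d' => (Q d').mulVec (colfam u W (r, Sum.inr ⟨d, i⟩) d'))
              = Function.update (fun d' => (Q d').mulVec (u r d')) d
                  ((Q d).mulVec (fun b => W r d b i)) from update_lift Q (u r) d _]
          exact tp_update_apply _ _ _ _
        simp only [hLj, hRi]
        have e1 : ∑ j, x' (r, Sum.inr ⟨d, j⟩)
              * (Z r d (a d) j * ∏ d' ∈ Finset.univ.erase d, (Q d').mulVec (u r d') (a d'))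
            = (∑ j, x' (r, Sum.inr ⟨d, j⟩) * Z r d (a d) j)
              * ∏ d' ∈ Finset.univ.erase d, (Q d').mulVec (u r d') (a d') := by
          rw [Finset.sum_mul]
          exact Finset.sum_congr rfl fun j _ => by ring
        have e2 : ∑ i, x (r, Sum.inr ⟨d, i⟩)
              * ((Q d).mulVec (fun b => W r d b i) (a d)
                  * ∏ d' ∈ Finset.univ.erase d, (Q d').mulVec (u r d') (a d'))
            = (∑ i, x (r, Sum.inr ⟨d, i⟩) * (Q d).mulVec (fun b => W r d b i) (a d))
              * ∏ d' ∈ Finset.univ.erase d, (Q d').mulVec (u r d') (a d') := by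
          rw [Finset.sum_mul]
          exact Finset.sum_congr rfl fun i _ => by ring
        rw [e1, e2]
        congr 1
        have hl := congrFun (hZs r d) (a d)
        simp only [Finset.sum_apply, Pi.smul_apply, smul_eq_mul] at hl
        have hr2 : s r d (a d)
            = ∑ i, x (r, Sum.inr ⟨d, i⟩) * (Q d).mulVec (fun b => W r d b i) (a d) := by
          show (∑ i, x (r, Sum.inr ⟨d, i⟩) • (Q d).mulVec (fun b => W r d b i)) (a d) = _
          simp only [Finset.sum_apply, Pi.smul_apply, smul_eq_mul]
        calc ∑ j, x' (r, Sum.inr ⟨d, j⟩) * Z r d (a d) j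
            = ∑ j, ((fun b => Z r d b j) ⬝ᵥ s r d) * Z r d (a d) j := rfl
          _ = s r d (a d) := hl
          _ = _ := hr2
      have hGx : TG.mulVec x = fun a => ∑ p, x p * tp (colfam u W p) a := by
        rw [hTGdef]; exact TmulVec_colfam u W x
      have hval : (TA.mulVec x') ⬝ᵥ (TA.mulVec x') = (TG.mulVec x) ⬝ᵥ (TG.mulVec x) := by
        rw [hAx, hGx, dot_expand, dot_expand]
        refine Finset.sum_congr rfl fun p _ => Finset.sum_congr rfl fun q _ => ?_
        congr 1
        exact Finset.prod_congr rfl fun d _ => hqd d _ _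
      rw [vecEnorm_eq_sqrt, vecEnorm_eq_sqrt, hval]
    exact csInf_le_csInf (sigma_bddBelow TA)
      ⟨_, ⟨(fun p => if p = ((⟨0, hR⟩ : Fin R), Sum.inl ()) then (1:ℝ) else 0),
        vecEnorm_single _, rfl⟩⟩ hsub
  -- ============ direction ≥ ============
  have hge : sigmaMin TG ≤ sigmaMin TA := by
    have hnonempty : { v | ∃ x', vecEnorm x' = 1 ∧ v = vecEnorm (TA.mulVec x') }.Nonempty :=
      ⟨_, ⟨(fun p => if p = ((⟨0, hR⟩ : Fin R), Sum.inl ()) then (1:ℝ) else 0),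
        vecEnorm_single _, rfl⟩⟩
    refine le_csInf hnonempty ?_
    rintro v ⟨x', hx', rfl⟩
    -- the z-trick : small Gram bound on the reduced products
    have hkey : ∀ (d : Fin D) (c : Fin R → ℝ),
        sigmaMin TG ^ 2 * (∑ r, c r * c r)
          ≤ ∑ r, ∑ s, c r * c s * ∏ d' ∈ Finset.univ.erase d, (u r d' ⬝ᵥ u s d') := by
      intro d c
      set z : Fin (m d) → ℝ := fun b => if b = ⟨0, hm d⟩ then 1 else 0 with hzdef
      have hzz : z ⬝ᵥ z = 1 := by
        rw [show z ⬝ᵥ z = ∑ b, z b * z b from rfl]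
        rw [Finset.sum_eq_single (⟨0, hm d⟩ : Fin (m d))]
        · simp [hzdef]
        · intro b _ hb; simp [hzdef, hb]
        · intro hb; exact absurd (Finset.mem_univ _) hb
      set ze : ∀ d', Fin (m d') → ℝ :=
        Function.update (fun d' => (0 : Fin (m d') → ℝ)) d z with hzedef
      have hzed : ze d = z := by rw [hzedef]; simp
      have hzene : ∀ d', d' ≠ d → ze d' = 0 := by
        intro d' h; rw [hzedef]; simp [Function.update_of_ne h]
      set xt : (Fin R × (Unit ⊕ Σ d : Fin D, Fin (m d - 1))) → ℝ :=
        fun p => Sum.elim (fun _ => c p.1 * (u p.1 d ⬝ᵥ z))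
          (fun q => c p.1 * ((fun b => W p.1 q.1 b q.2) ⬝ᵥ ze q.1)) p.2 with hxtdef
      have hunit : ∀ r, (u r d ⬝ᵥ z) * (u r d ⬝ᵥ z)
          + ∑ i, ((fun b => W r d b i) ⬝ᵥ z) * ((fun b => W r d b i) ⬝ᵥ z) = 1 := by
        intro r
        have h0 := congrArg (fun t => t ⬝ᵥ z) (compW r d z)
        simp only [add_dotProduct, dot_sum_left, smul_dotProduct, smul_eq_mul] at h0
        rw [← hzz]
        exact h0
      have hxtnorm : xt ⬝ᵥ xt = ∑ r, c r * c r := by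
        rw [show xt ⬝ᵥ xt = ∑ p, xt p * xt p from rfl, sum_colindex (fun p => xt p * xt p)]
        refine Finset.sum_congr rfl fun r _ => ?_
        have hinner : ∀ d' : Fin D, (∑ i : Fin (m d' - 1),
            xt (r, Sum.inr ⟨d', i⟩) * xt (r, Sum.inr ⟨d', i⟩))
            = if d' = d then
                ∑ i : Fin (m d - 1), xt (r, Sum.inr ⟨d, i⟩) * xt (r, Sum.inr ⟨d, i⟩)
              else 0 := by
          intro d'
          rcases eq_or_ne d' d with rfl | hne
          · simp
          · rw [if_neg hne]
            refine Finset.sum_eq_zero fun i _ => ?_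
            show (c r * ((fun b => W r d' b i) ⬝ᵥ ze d'))
                * (c r * ((fun b => W r d' b i) ⬝ᵥ ze d')) = 0
            rw [hzene d' hne, dotProduct_zero, mul_zero, zero_mul]
        rw [show (∑ d', ∑ i : Fin (m d' - 1),
              xt (r, Sum.inr ⟨d', i⟩) * xt (r, Sum.inr ⟨d', i⟩))
            = ∑ d', if d' = d then
                ∑ i : Fin (m d - 1), xt (r, Sum.inr ⟨d, i⟩) * xt (r, Sum.inr ⟨d, i⟩)
              else 0 from Finset.sum_congr rfl fun d' _ => hinner d']
        rw [Finset.sum_ite_eq' Finset.univ d]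
        rw [if_pos (Finset.mem_univ d)]
        show (c r * (u r d ⬝ᵥ z)) * (c r * (u r d ⬝ᵥ z))
            + ∑ i, (c r * ((fun b => W r d b i) ⬝ᵥ ze d))
              * (c r * ((fun b => W r d b i) ⬝ᵥ ze d)) = c r * c r
        simp only [hzed]
        rw [show (∑ i, (c r * ((fun b => W r d b i) ⬝ᵥ z))
              * (c r * ((fun b => W r d b i) ⬝ᵥ z)))
            = c r * c r * ∑ i, ((fun b => W r d b i) ⬝ᵥ z) * ((fun b => W r d b i) ⬝ᵥ z)
            from by rw [Finset.mul_sum]; exact Finset.sum_congr rfl fun i _ => by ring]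
        have := hunit r
        nlinarith [hunit r]
      have hTxt : TG.mulVec xt = fun a => ∑ r, c r * tp (Function.update (u r) d z) a := by
        funext a
        rw [hTGdef, TmulVec]
        refine Finset.sum_congr rfl fun r _ => ?_
        have hinner : ∀ d' : Fin D, (∑ i : Fin (m d' - 1), xt (r, Sum.inr ⟨d', i⟩)
              * tp (Function.update (u r) d' (fun b => W r d' b i)) a)
            = if d' = d then ∑ i : Fin (m d - 1), xt (r, Sum.inr ⟨d, i⟩)
                * tp (Function.update (u r) d (fun b => W r d b i)) a
              else 0 := by
          intro d'
          rcases eq_or_ne d' d with rfl | hne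
          · simp
          · rw [if_neg hne]
            refine Finset.sum_eq_zero fun i _ => ?_
            rw [show xt (r, Sum.inr ⟨d', i⟩) = c r * ((fun b => W r d' b i) ⬝ᵥ ze d')
                from rfl, hzene d' hne, dotProduct_zero, mul_zero, zero_mul]
        rw [show (∑ d', ∑ i : Fin (m d' - 1), xt (r, Sum.inr ⟨d', i⟩)
              * tp (Function.update (u r) d' (fun b => W r d' b i)) a)
            = ∑ d', if d' = d then ∑ i : Fin (m d - 1), xt (r, Sum.inr ⟨d, i⟩)
                * tp (Function.update (u r) d (fun b => W r d b i)) a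
              else 0 from Finset.sum_congr rfl fun d' _ => hinner d']
        rw [Finset.sum_ite_eq' Finset.univ d, if_pos (Finset.mem_univ d)]
        simp only [tp_update_apply]
        rw [tp_split (u r) d a]
        rw [show xt (r, Sum.inl ()) = c r * (u r d ⬝ᵥ z) from rfl]
        have hxti : ∀ i, xt (r, Sum.inr ⟨d, i⟩) = c r * ((fun b => W r d b i) ⬝ᵥ z) := by
          intro i
          rw [show xt (r, Sum.inr ⟨d, i⟩) = c r * ((fun b => W r d b i) ⬝ᵥ ze d) from rfl,
            hzed]
        simp only [hxti]
        have hz := congrFun (compW r d z) (a d)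
        simp only [Pi.add_apply, Pi.smul_apply, Finset.sum_apply, smul_eq_mul] at hz
        set P := ∏ d' ∈ Finset.univ.erase d, u r d' (a d') with hPdef
        calc c r * (u r d ⬝ᵥ z) * (u r d (a d) * P)
              + ∑ i, c r * ((fun b => W r d b i) ⬝ᵥ z) * (W r d (a d) i * P)
            = c r * (((u r d ⬝ᵥ z) * u r d (a d)
                + ∑ i, ((fun b => W r d b i) ⬝ᵥ z) * W r d (a d) i) * P) := by
              rw [add_mul, mul_add, Finset.sum_mul, Finset.mul_sum]
              congr 1
              · ring
              · exact Finset.sum_congr rfl fun i _ => by ring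
          _ = c r * (z (a d) * P) := by rw [hz]
      calc sigmaMin TG ^ 2 * (∑ r, c r * c r)
          = sigmaMin TG ^ 2 * (xt ⬝ᵥ xt) := by rw [hxtnorm]
        _ ≤ (TG.mulVec xt) ⬝ᵥ (TG.mulVec xt) := sigmaMin_sq_le TG xt
        _ = ∑ r, ∑ s, c r * c s * ∏ d' ∈ Finset.univ.erase d, (u r d' ⬝ᵥ u s d') := by
            rw [hTxt, dot_expand]
            refine Finset.sum_congr rfl fun r _ => Finset.sum_congr rfl fun s _ => ?_
            rw [update_dot, hzz, one_mul]
    -- decomposition data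
    set w : ∀ (_ : Fin R) (d : Fin D), Fin (n d) → ℝ :=
      fun r d => ∑ j, x' (r, Sum.inr ⟨d, j⟩) • (fun b => Z r d b j) with hwdef
    set bb : ∀ (_ : Fin R) (d : Fin D), Fin (m d - 1) → ℝ :=
      fun r d i => ((Q d).mulVec (fun b => W r d b i)) ⬝ᵥ w r d with hbbdef
    set yy : ∀ (_ : Fin R) (d : Fin D), Fin (n d) → ℝ :=
      fun r d => w r d - ∑ i, bb r d i • (Q d).mulVec (fun b => W r d b i) with hyydef
    set x : (Fin R × (Unit ⊕ Σ d : Fin D, Fin (m d - 1))) → ℝ :=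
      fun p => Sum.elim (fun _ => x' (p.1, Sum.inl ())) (fun q => bb p.1 q.1 q.2) p.2
      with hxdef
    have hQuw : ∀ r d, ((Q d).mulVec (u r d)) ⬝ᵥ w r d = 0 := by
      intro r d
      rw [show w r d = ∑ j, x' (r, Sum.inr ⟨d, j⟩) • (fun b => Z r d b j) from rfl,
        dot_sum_right]
      simp only [dotProduct_smul, smul_eq_mul, hQuZdot, mul_zero, Finset.sum_const_zero]
    have hwsplit : ∀ r d,
        w r d = ∑ i, bb r d i • (Q d).mulVec (fun b => W r d b i) + yy r d := by
      intro r d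
      rw [show yy r d = w r d - ∑ i, bb r d i • (Q d).mulVec (fun b => W r d b i) from rfl]
      abel
    have hQtw : ∀ r d (t : Fin (m d) → ℝ),
        ((Q d).mulVec t) ⬝ᵥ w r d = ∑ i, ((fun b => W r d b i) ⬝ᵥ t) * bb r d i := by
      intro r d t
      conv_lhs => rw [← compW r d t]
      rw [Matrix.mulVec_add, Matrix.mulVec_smul, TuckerAux.mulVec_sum]
      rw [add_dotProduct, smul_dotProduct, smul_eq_mul, hQuw r d, mul_zero, zero_add,
        dot_sum_left]
      refine Finset.sum_congr rfl fun i _ => ?_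
      rw [show (Q d).mulVec (((fun b => W r d b i) ⬝ᵥ t) • (fun b => W r d b i))
          = ((fun b => W r d b i) ⬝ᵥ t) • (Q d).mulVec (fun b => W r d b i) from
          Matrix.mulVec_smul _ _ _, smul_dotProduct, smul_eq_mul]
    have hyq : ∀ r d (t : Fin (m d) → ℝ), ((Q d).mulVec t) ⬝ᵥ yy r d = 0 := by
      intro r d t
      have e0 : ((Q d).mulVec t) ⬝ᵥ yy r d
          = ((Q d).mulVec t) ⬝ᵥ w r d
            - ((Q d).mulVec t) ⬝ᵥ (∑ i, bb r d i • (Q d).mulVec (fun b => W r d b i)) := by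
        rw [show yy r d = w r d - ∑ i, bb r d i • (Q d).mulVec (fun b => W r d b i) from rfl]
        exact dotProduct_sub _ _ _
      rw [e0, hQtw r d t, dot_sum_right]
      rw [show (∑ i, ((Q d).mulVec t) ⬝ᵥ (bb r d i • (Q d).mulVec (fun b => W r d b i)))
          = ∑ i, ((fun b => W r d b i) ⬝ᵥ t) * bb r d i from ?_]
      · ring
      refine Finset.sum_congr rfl fun i _ => ?_
      rw [dotProduct_smul, smul_eq_mul, hqd, dotProduct_comm]
      ring
    -- norms of the blocks
    have hww : ∀ r d, w r d ⬝ᵥ w r d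
        = ∑ j, x' (r, Sum.inr ⟨d, j⟩) * x' (r, Sum.inr ⟨d, j⟩) := by
      intro r d
      rw [show w r d = ∑ j, x' (r, Sum.inr ⟨d, j⟩) • (fun b => Z r d b j) from rfl,
        dot_sum_left]
      simp only [smul_dotProduct, dot_sum_right, dotProduct_smul, smul_eq_mul, hZdot]
      simp [mul_ite, mul_one, mul_zero, Finset.sum_ite_eq]
    have hSdotS : ∀ r d, (∑ i, bb r d i • (Q d).mulVec (fun b => W r d b i))
        ⬝ᵥ (∑ i, bb r d i • (Q d).mulVec (fun b => W r d b i))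
        = ∑ i, bb r d i * bb r d i := by
      intro r d
      rw [dot_sum_left]
      simp only [smul_dotProduct, dot_sum_right, dotProduct_smul, smul_eq_mul, hqd, hWdot]
      simp [mul_ite, mul_one, mul_zero, Finset.sum_ite_eq]
    have hblock : ∀ r d, (∑ j, x' (r, Sum.inr ⟨d, j⟩) * x' (r, Sum.inr ⟨d, j⟩))
        = (∑ i, bb r d i * bb r d i) + yy r d ⬝ᵥ yy r d := by
      intro r d
      rw [← hww r d]
      conv_lhs => rw [hwsplit r d]
      rw [add_dotProduct, dotProduct_add, dotProduct_add]
      have hcross : (∑ i, bb r d i • (Q d).mulVec (fun b => W r d b i)) ⬝ᵥ yy r d = 0 := by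
        rw [dot_sum_left]
        refine Finset.sum_eq_zero fun i _ => ?_
        rw [smul_dotProduct, smul_eq_mul, hyq r d, mul_zero]
      have hcross' : yy r d ⬝ᵥ (∑ i, bb r d i • (Q d).mulVec (fun b => W r d b i)) = 0 := by
        rw [dotProduct_comm]; exact hcross
      rw [hcross, hcross', hSdotS r d]
      ring
    -- the decomposition of the big image
    set PP : (∀ d, Fin (n d)) → ℝ :=
      fun a => ∑ p, x p * tp (fun d => (Q d).mulVec (colfam u W p d)) a with hPPdef
    set SS : Fin D → (∀ d, Fin (n d)) → ℝ :=
      fun d a => ∑ r, tp (Function.update (fun d' => (Q d').mulVec (u r d')) d (yy r d)) a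
      with hSSdef
    have hdecomp : TA.mulVec x' = fun a => PP a + ∑ d, SS d a := by
      funext a
      rw [hTAdef, TmulVec]
      rw [show PP a = ∑ r, (x (r, Sum.inl ())
            * tp (fun d => (Q d).mulVec (colfam u W (r, Sum.inl ()) d)) a
          + ∑ d, ∑ i, x (r, Sum.inr ⟨d, i⟩)
            * tp (fun d' => (Q d').mulVec (colfam u W (r, Sum.inr ⟨d, i⟩) d')) a) from
        sum_colindex (fun p => x p * tp (fun d => (Q d).mulVec (colfam u W p d)) a)]
      rw [show (∑ d, SS d a) = ∑ r, ∑ d,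
          tp (Function.update (fun d' => (Q d').mulVec (u r d')) d (yy r d)) a from
        Finset.sum_comm]
      rw [← Finset.sum_add_distrib]
      refine Finset.sum_congr rfl fun r _ => ?_
      rw [add_assoc, ← Finset.sum_add_distrib]
      congr 1
      refine Finset.sum_congr rfl fun d _ => ?_
      have hLj : ∀ j : Fin (n d - 1),
          tp (Function.update (fun d0 => (Q d0).mulVec (u r d0)) d (fun b => Z r d b j)) a
            = Z r d (a d) j * ∏ d' ∈ Finset.univ.erase d, (Q d').mulVec (u r d') (a d') :=
        fun j => tp_update_apply _ _ _ _
      have hRi : ∀ i : Fin (m d - 1),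
          tp (fun d' => (Q d').mulVec (colfam u W (r, Sum.inr ⟨d, i⟩) d')) a
            = (Q d).mulVec (fun b => W r d b i) (a d)
                * ∏ d' ∈ Finset.univ.erase d, (Q d').mulVec (u r d') (a d') := by
        intro i
        rw [show (fun d' => (Q d').mulVec (colfam u W (r, Sum.inr ⟨d, i⟩) d'))
            = Function.update (fun d' => (Q d').mulVec (u r d')) d
                ((Q d).mulVec (fun b => W r d b i)) from update_lift Q (u r) d _]
        exact tp_update_apply _ _ _ _
      have hY : tp (Function.update (fun d' => (Q d').mulVec (u r d')) d (yy r d)) a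
          = yy r d (a d) * ∏ d' ∈ Finset.univ.erase d, (Q d').mulVec (u r d') (a d') :=
        tp_update_apply _ _ _ _
      simp only [hLj, hRi, hY]
      set P := ∏ d' ∈ Finset.univ.erase d, (Q d').mulVec (u r d') (a d') with hPdef
      have e1 : ∑ j, x' (r, Sum.inr ⟨d, j⟩) * (Z r d (a d) j * P)
          = (∑ j, x' (r, Sum.inr ⟨d, j⟩) * Z r d (a d) j) * P := by
        rw [Finset.sum_mul]
        exact Finset.sum_congr rfl fun j _ => by ring
      have e2 : ∑ i, x (r, Sum.inr ⟨d, i⟩) * ((Q d).mulVec (fun b => W r d b i) (a d) * P)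
          = (∑ i, bb r d i * (Q d).mulVec (fun b => W r d b i) (a d)) * P := by
        rw [Finset.sum_mul]
        exact Finset.sum_congr rfl fun i _ => by
          rw [show x (r, Sum.inr ⟨d, i⟩) = bb r d i from rfl]; ring
      rw [e1, e2]
      have hwad := congrFun (hwsplit r d) (a d)
      simp only [Pi.add_apply, Pi.sub_apply, Finset.sum_apply, Pi.smul_apply,
        smul_eq_mul] at hwad
      have hlw : (∑ j, x' (r, Sum.inr ⟨d, j⟩) * Z r d (a d) j) = w r d (a d) := by
        show _ = (∑ j, x' (r, Sum.inr ⟨d, j⟩) • (fun b => Z r d b j)) (a d)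
        simp only [Finset.sum_apply, Pi.smul_apply, smul_eq_mul]
      rw [hlw, hwad]
      ring
    -- cross terms vanish
    have hSSfun : ∀ d, SS d = fun a => ∑ r, (fun _ : Fin R => (1:ℝ)) r
        * tp (Function.update (fun d' => (Q d').mulVec (u r d')) d (yy r d)) a := by
      intro d
      funext a
      rw [show SS d a = ∑ r,
        tp (Function.update (fun d' => (Q d').mulVec (u r d')) d (yy r d)) a from rfl]
      exact Finset.sum_congr rfl fun r _ => by ring
    have hPS : ∀ d, PP ⬝ᵥ SS d = 0 := by
      intro d
      rw [hSSfun d, show PP = fun a => ∑ p, x p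
        * tp (fun d => (Q d).mulVec (colfam u W p d)) a from rfl, dot_expand]
      refine Finset.sum_eq_zero fun p _ => Finset.sum_eq_zero fun r _ => ?_
      rw [Finset.prod_eq_zero (Finset.mem_univ d), mul_zero]
      rw [Function.update_self]
      exact hyq r d _
    have hSP : ∀ d, SS d ⬝ᵥ PP = 0 := fun d => by rw [dotProduct_comm]; exact hPS d
    have hSSod : ∀ d e, d ≠ e → SS d ⬝ᵥ SS e = 0 := by
      intro d e hde
      rw [hSSfun d, hSSfun e, dot_expand]
      refine Finset.sum_eq_zero fun r _ => Finset.sum_eq_zero fun s _ => ?_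
      rw [Finset.prod_eq_zero (Finset.mem_univ d), mul_zero]
      rw [Function.update_self, Function.update_of_ne hde]
      rw [dotProduct_comm]
      exact hyq r d _
    have hSSdiag : ∀ d, SS d ⬝ᵥ SS d
        = ∑ r, ∑ s, (yy r d ⬝ᵥ yy s d)
            * ∏ d' ∈ Finset.univ.erase d, (u r d' ⬝ᵥ u s d') := by
      intro d
      rw [hSSfun d, dot_expand]
      refine Finset.sum_congr rfl fun r _ => Finset.sum_congr rfl fun s _ => ?_
      rw [update_dot, one_mul, one_mul]
      congr 1
      exact Finset.prod_congr rfl fun d' _ => hqd d' _ _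
    have hPPval : PP ⬝ᵥ PP = (TG.mulVec x) ⬝ᵥ (TG.mulVec x) := by
      rw [show PP = fun a => ∑ p, x p * tp (fun d => (Q d).mulVec (colfam u W p d)) a
        from rfl, hTGdef, TmulVec_colfam u W x, dot_expand, dot_expand]
      refine Finset.sum_congr rfl fun p _ => Finset.sum_congr rfl fun q _ => ?_
      congr 1
      exact Finset.prod_congr rfl fun d _ => hqd d _ _
    -- total dot product
    have hdot : (TA.mulVec x') ⬝ᵥ (TA.mulVec x') = PP ⬝ᵥ PP + ∑ d, SS d ⬝ᵥ SS d := by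
      rw [hdecomp]
      rw [show (fun a => PP a + ∑ d, SS d a) = PP + ∑ d, SS d from by
        funext a; simp [Finset.sum_apply]]
      rw [add_dotProduct, dotProduct_add, dotProduct_add]
      rw [dot_sum_right, dot_sum_left]
      simp only [hPS, Finset.sum_const_zero, add_zero]
      rw [show ((∑ d, SS d) ⬝ᵥ (∑ d, SS d)) = ∑ d, SS d ⬝ᵥ SS d from ?_]
      · rw [show (∑ d, SS d ⬝ᵥ PP) = 0 from Finset.sum_eq_zero fun d _ => hSP d, zero_add]
      rw [dot_sum_left]
      refine Finset.sum_congr rfl fun d _ => ?_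
      rw [dot_sum_right]
      rw [Finset.sum_eq_single d]
      · intro e _ hed
        exact hSSod d e (Ne.symm hed)
      · intro hd; exact absurd (Finset.mem_univ d) hd
    -- lower bound on each SS block
    have hSSge : ∀ d, sigmaMin TG ^ 2 * (∑ r, yy r d ⬝ᵥ yy r d) ≤ SS d ⬝ᵥ SS d := by
      intro d
      rw [hSSdiag d]
      have e1 : (∑ r, yy r d ⬝ᵥ yy r d) = ∑ k, ∑ r, yy r d k * yy r d k := by
        rw [show (∑ r, yy r d ⬝ᵥ yy r d) = ∑ r, ∑ k, yy r d k * yy r d k from rfl]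
        exact Finset.sum_comm
      have e2 : (∑ r, ∑ s, (yy r d ⬝ᵥ yy s d)
            * ∏ d' ∈ Finset.univ.erase d, (u r d' ⬝ᵥ u s d'))
          = ∑ k, ∑ r, ∑ s, (yy r d k * yy s d k)
            * ∏ d' ∈ Finset.univ.erase d, (u r d' ⬝ᵥ u s d') := by
        rw [show (∑ r, ∑ s, (yy r d ⬝ᵥ yy s d)
              * ∏ d' ∈ Finset.univ.erase d, (u r d' ⬝ᵥ u s d'))
            = ∑ r, ∑ s, ∑ k, (yy r d k * yy s d k)
              * ∏ d' ∈ Finset.univ.erase d, (u r d' ⬝ᵥ u s d') from by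
          refine Finset.sum_congr rfl fun r _ => Finset.sum_congr rfl fun s _ => ?_
          rw [show (yy r d ⬝ᵥ yy s d) = ∑ k, yy r d k * yy s d k from rfl, Finset.sum_mul]]
        rw [show (∑ r, ∑ s, ∑ k, (yy r d k * yy s d k)
              * ∏ d' ∈ Finset.univ.erase d, (u r d' ⬝ᵥ u s d'))
            = ∑ r, ∑ k, ∑ s, (yy r d k * yy s d k)
              * ∏ d' ∈ Finset.univ.erase d, (u r d' ⬝ᵥ u s d') from
          Finset.sum_congr rfl fun r _ => Finset.sum_comm]
        exact Finset.sum_comm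
      rw [e1, e2, Finset.mul_sum]
      exact Finset.sum_le_sum fun k _ => hkey d (fun r => yy r d k)
    -- norm splitting of x'
    have hxx' : x' ⬝ᵥ x' = x ⬝ᵥ x + ∑ d, ∑ r, yy r d ⬝ᵥ yy r d := by
      rw [show x' ⬝ᵥ x' = ∑ p, x' p * x' p from rfl,
        show x ⬝ᵥ x = ∑ p, x p * x p from rfl,
        sum_colindex (fun p => x' p * x' p), sum_colindex (fun p => x p * x p)]
      rw [show (∑ d, ∑ r, yy r d ⬝ᵥ yy r d) = ∑ r, ∑ d, yy r d ⬝ᵥ yy r d from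
        Finset.sum_comm]
      rw [← Finset.sum_add_distrib]
      refine Finset.sum_congr rfl fun r _ => ?_
      rw [add_assoc, ← Finset.sum_add_distrib]
      congr 1
      refine Finset.sum_congr rfl fun d _ => ?_
      exact hblock r d
    -- conclusion
    have hone : x' ⬝ᵥ x' = 1 := dot_of_unit hx'
    have hfinal : sigmaMin TG ^ 2 ≤ (TA.mulVec x') ⬝ᵥ (TA.mulVec x') := by
      rw [hdot, hPPval]
      calc sigmaMin TG ^ 2 = sigmaMin TG ^ 2 * (x' ⬝ᵥ x') := by rw [hone, mul_one]
        _ = sigmaMin TG ^ 2 * (x ⬝ᵥ x)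
            + ∑ d, sigmaMin TG ^ 2 * ∑ r, yy r d ⬝ᵥ yy r d := by
            rw [hxx', mul_add, Finset.mul_sum]
        _ ≤ (TG.mulVec x) ⬝ᵥ (TG.mulVec x) + ∑ d, SS d ⬝ᵥ SS d :=
            add_le_add (sigmaMin_sq_le TG x) (Finset.sum_le_sum fun d _ => hSSge d)
    rw [vecEnorm_eq_sqrt]
    calc sigmaMin TG = Real.sqrt (sigmaMin TG ^ 2) :=
        (Real.sqrt_sq (sigmaMin_nonneg TG)).symm
      _ ≤ Real.sqrt ((TA.mulVec x') ⬝ᵥ (TA.mulVec x')) := Real.sqrt_le_sqrt hfinal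
  exact le_antisymm hle hge

end
end

section
/- Variant of the Kronecker singular-value identity with the orthogonal factor in an interior tensor slot (Remark 5.4). Let B_k ∈ ℝ^{m₁×p_k} and C_k ∈ ℝ^{m₂×q_k} for k = 1,…,K, set A_k := B_k ⊗ C_k ∈ ℝ^{m₁m₂×p_kq_k}, and let Q_k ∈ ℝ^{p×p} be orthogonal matrices. Then the matrices X := [A₁ … A_K] and Y := [B₁⊗Q₁⊗C₁ … B_K⊗Q_K⊗C_K] have the same singular values up to multiplicities: the nonzero singular values of Y are exactly the nonzero singular values of X, each appearing with multiplicity p. In particular, there exist orthogonal matrices P (of size m₁pm₂) and W (of size (Σ_k p_kq_k)p) with Y = P·(X ⊗ I_p)·W, after the natural identification of index sets. -/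
open scoped BigOperators
open Matrix

noncomputable section
open Polynomial Kronecker

/-- The block-row concatenation `X = [B₁⊗C₁ … B_K⊗C_K]`. -/
def blockRowKron2 {K : ℕ} {m₁ m₂ : ℕ} {p q : Fin K → ℕ}
    (B : ∀ k, Matrix (Fin m₁) (Fin (p k)) ℝ)
    (C : ∀ k, Matrix (Fin m₂) (Fin (q k)) ℝ) :
    Matrix (Fin m₁ × Fin m₂) (Σ k, Fin (p k) × Fin (q k)) ℝ :=
  Matrix.of fun a z => B z.1 a.1 z.2.1 * C z.1 a.2 z.2.2

/-- The block-row concatenation `Y = [B₁⊗Q₁⊗C₁ … B_K⊗Q_K⊗C_K]`, with the orthogonal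
factor in the interior tensor slot. -/
def blockRowKron3 {K : ℕ} {m₁ m₂ r : ℕ} {p q : Fin K → ℕ}
    (B : ∀ k, Matrix (Fin m₁) (Fin (p k)) ℝ)
    (Q : Fin K → Matrix (Fin r) (Fin r) ℝ)
    (C : ∀ k, Matrix (Fin m₂) (Fin (q k)) ℝ) :
    Matrix ((Fin m₁ × Fin r) × Fin m₂) (Σ k, (Fin (p k) × Fin r) × Fin (q k)) ℝ :=
  Matrix.of fun a z => B z.1 a.1.1 z.2.1.1 * Q z.1 a.1.2 z.2.1.2 * C z.1 a.2 z.2.2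

/-- `X ⊗ I_r`, with its row and column index sets identified with those of
`blockRowKron3 B Q C`. -/
def blockRowKron3Id {K : ℕ} {m₁ m₂ r : ℕ} {p q : Fin K → ℕ}
    (B : ∀ k, Matrix (Fin m₁) (Fin (p k)) ℝ)
    (C : ∀ k, Matrix (Fin m₂) (Fin (q k)) ℝ) :
    Matrix ((Fin m₁ × Fin r) × Fin m₂) (Σ k, (Fin (p k) × Fin r) × Fin (q k)) ℝ :=
  Matrix.of fun a z =>
    B z.1 a.1.1 z.2.1.1 * (if a.1.2 = z.2.1.2 then (1 : ℝ) else 0) * C z.1 a.2 z.2.2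

open Polynomial in
lemma charpoly_orth_conj {n : Type*} [Fintype n] [DecidableEq n]
    (M W : Matrix n n ℝ) (hW : Wᵀ * W = 1) :
    (Wᵀ * M * W).charpoly = M.charpoly := by
  set W' : Matrix n n ℝ[X] := W.map C with hW'
  have hW'1 : W'ᵀ * W' = 1 := by
    rw [hW', ← Matrix.transpose_map, ← Matrix.map_mul, hW]
    simp [Matrix.map_one]
  have key : charmatrix (Wᵀ * M * W) = W'ᵀ * charmatrix M * W' := by
    unfold charmatrix
    rw [Matrix.mul_sub, Matrix.sub_mul]
    congr 1
    · have hc : Matrix.scalar n (X : ℝ[X]) * W' = W' * Matrix.scalar n (X : ℝ[X]) :=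
        (Matrix.scalar_commute (X : ℝ[X]) (fun r' => Commute.all X r') W')
      rw [Matrix.mul_assoc, hc, ← Matrix.mul_assoc, hW'1, Matrix.one_mul]
    · simp only [RingHom.mapMatrix_apply]
      rw [← Matrix.transpose_map, ← Matrix.map_mul, ← Matrix.map_mul]
  rw [Matrix.charpoly, Matrix.charpoly, key, Matrix.det_mul, Matrix.det_mul]
  have h1 : W'ᵀ.det * W'.det = 1 := by rw [← Matrix.det_mul, hW'1, Matrix.det_one]
  calc W'ᵀ.det * (charmatrix M).det * W'.det
      = (charmatrix M).det * (W'ᵀ.det * W'.det) := by ring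
    _ = (charmatrix M).det := by rw [h1, mul_one]

lemma charpoly_blockDiagonal_const {n o : Type*} [Fintype n] [DecidableEq n]
    [Fintype o] [DecidableEq o] (M : Matrix n n ℝ) :
    (blockDiagonal fun _ : o => M).charpoly = M.charpoly ^ (Fintype.card o) := by
  have key : charmatrix (blockDiagonal fun _ : o => M)
      = blockDiagonal (fun _ : o => charmatrix M) := by
    ext ⟨i, a⟩ ⟨j, b⟩
    by_cases hab : a = b
    · subst hab
      by_cases hij : i = j <;>
        simp [charmatrix_apply, blockDiagonal_apply, diagonal_apply, Prod.ext_iff, hij]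
    · simp [charmatrix_apply, blockDiagonal_apply, diagonal_apply, Prod.ext_iff, hab]
  rw [Matrix.charpoly, key, Matrix.det_blockDiagonal, Finset.prod_const, Finset.card_univ,
    Matrix.charpoly]

/-- **Remark 5.4.** Variant of the Kronecker singular-value identity with the orthogonal
factor `Q_k` in an interior tensor slot: with `A_k := B_k ⊗ C_k`,
`X := [A₁ … A_K]` and `Y := [B₁⊗Q₁⊗C₁ … B_K⊗Q_K⊗C_K]` have the same singular values up
to multiplicities (`charpoly(YᵀY) = charpoly(XᵀX)^r`, so the nonzero singular values of
`Y` are those of `X`, each with multiplicity `r`); in particular `Y = P·(X⊗I_r)·W` for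
some orthogonal `P` and `W`, after the natural identification of index sets. -/
theorem kronecker_singular_value_identity_interior_slot
    {K m₁ m₂ r : ℕ} {p q : Fin K → ℕ}
    (B : ∀ k, Matrix (Fin m₁) (Fin (p k)) ℝ)
    (C : ∀ k, Matrix (Fin m₂) (Fin (q k)) ℝ)
    (Q : Fin K → Matrix (Fin r) (Fin r) ℝ)
    (hQ : ∀ k, (Q k)ᵀ * Q k = 1) :
    ((blockRowKron3 B Q C)ᵀ * blockRowKron3 B Q C).charpoly
      = ((blockRowKron2 B C)ᵀ * blockRowKron2 B C).charpoly ^ r ∧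
    (∃ (P : Matrix ((Fin m₁ × Fin r) × Fin m₂) ((Fin m₁ × Fin r) × Fin m₂) ℝ)
        (W : Matrix (Σ k, (Fin (p k) × Fin r) × Fin (q k))
          (Σ k, (Fin (p k) × Fin r) × Fin (q k)) ℝ),
        Pᵀ * P = 1 ∧ Wᵀ * W = 1 ∧
        blockRowKron3 B Q C = P * blockRowKron3Id (r := r) B C * W) := by
  classical
  set Mk : ∀ k, Matrix ((Fin (p k) × Fin r) × Fin (q k)) ((Fin (p k) × Fin r) × Fin (q k)) ℝ :=
    fun k => ((1 : Matrix (Fin (p k)) (Fin (p k)) ℝ) ⊗ₖ Q k) ⊗ₖ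
      (1 : Matrix (Fin (q k)) (Fin (q k)) ℝ) with hMk
  set W : Matrix (Σ k, (Fin (p k) × Fin r) × Fin (q k))
      (Σ k, (Fin (p k) × Fin r) × Fin (q k)) ℝ := blockDiagonal' Mk with hWdef
  have hW : Wᵀ * W = 1 := by
    rw [hWdef, blockDiagonal'_transpose, ← blockDiagonal'_mul]
    have hblk : ∀ k, (Mk k)ᵀ * Mk k = 1 := by
      intro k
      rw [hMk]
      rw [← Matrix.kroneckerMap_transpose, Matrix.transpose_one,
        ← Matrix.kroneckerMap_transpose, Matrix.transpose_one,
        ← Matrix.mul_kronecker_mul, ← Matrix.mul_kronecker_mul, hQ k, Matrix.one_mul,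
        Matrix.one_mul, Matrix.one_kronecker_one, Matrix.one_kronecker_one]
    simp only [hblk]
    exact blockDiagonal'_one
  have hYZ : blockRowKron3 B Q C = blockRowKron3Id (r := r) B C * W := by
    ext a z
    obtain ⟨k, ⟨j, s⟩, l⟩ := z
    rw [Matrix.mul_apply, ← Finset.univ_sigma_univ, Finset.sum_sigma]
    rw [Finset.sum_eq_single k]
    · simp only [hWdef, blockDiagonal'_apply_eq, hMk, Matrix.kroneckerMap_apply,
        blockRowKron3Id, blockRowKron3, Matrix.of_apply, Matrix.one_apply,
        Fintype.sum_prod_type]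
      simp only [Finset.sum_ite_eq, Finset.sum_ite_eq', ite_mul, mul_ite, Finset.mul_sum,
        Finset.sum_mul, one_mul, mul_one, zero_mul, mul_zero, Finset.sum_ite_eq,
        Finset.mem_univ, if_true, Finset.sum_const_zero]
      ring_nf
      simp [Finset.sum_ite_eq', mul_comm, mul_left_comm, mul_assoc]
    · intro b _ hb
      apply Finset.sum_eq_zero
      intro y _
      rw [hWdef, blockDiagonal'_apply_ne _ _ _ hb, mul_zero]
    · intro h; exact absurd (Finset.mem_univ k) h
  set G := (blockRowKron2 B C)ᵀ * blockRowKron2 B C with hG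
  let e : ((Σ k, Fin (p k) × Fin (q k)) × Fin r) ≃ (Σ k, (Fin (p k) × Fin r) × Fin (q k)) :=
    { toFun := fun x => ⟨x.1.1, ((x.1.2.1, x.2), x.1.2.2)⟩
      invFun := fun z => (⟨z.1, (z.2.1.1, z.2.2)⟩, z.2.1.2)
      left_inv := fun x => rfl
      right_inv := fun z => rfl }
  have hZ : (blockRowKron3Id B C (r := r))ᵀ * blockRowKron3Id (r := r) B C
      = reindex e e (blockDiagonal fun _ : Fin r => G) := by
    ext z z'
    obtain ⟨k, ⟨j, s⟩, l⟩ := z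
    obtain ⟨k', ⟨j', s'⟩, l'⟩ := z'
    rw [Matrix.mul_apply]
    have he : ∀ (k₀ : Fin K) (j₀ : Fin (p k₀)) (s₀ : Fin r) (l₀ : Fin (q k₀)),
        e.symm ⟨k₀, ((j₀, s₀), l₀)⟩ = (⟨k₀, (j₀, l₀)⟩, s₀) := fun _ _ _ _ => rfl
    simp only [Matrix.reindex_apply, Matrix.submatrix_apply, he,
      blockDiagonal_apply, Matrix.transpose_apply, blockRowKron3Id,
      Matrix.of_apply]
    by_cases hss : s = s'
    · subst hss
      rw [if_pos rfl]
      have h1 : (∑ a : (Fin m₁ × Fin r) × Fin m₂,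
          B k a.1.1 j * (if a.1.2 = s then (1:ℝ) else 0) * C k a.2 l *
          (B k' a.1.1 j' * (if a.1.2 = s then (1:ℝ) else 0) * C k' a.2 l'))
          = ∑ x : Fin r × (Fin m₁ × Fin m₂),
              (if x.1 = s then (B k x.2.1 j * C k x.2.2 l) * (B k' x.2.1 j' * C k' x.2.2 l')
                else 0) := by
        refine (Fintype.sum_equiv
          ⟨fun x => ((x.2.1, x.1), x.2.2), fun a => (a.1.2, (a.1.1, a.2)),
            fun _ => rfl, fun _ => rfl⟩ _ _ ?_).symm
        intro x
        by_cases h : x.1 = s <;> simp [h]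
      rw [h1, Fintype.sum_prod_type]
      have h2 : ∀ t : Fin r, (∑ b : Fin m₁ × Fin m₂,
          if t = s then (B k b.1 j * C k b.2 l) * (B k' b.1 j' * C k' b.2 l') else 0)
          = if t = s then (∑ b : Fin m₁ × Fin m₂,
              (B k b.1 j * C k b.2 l) * (B k' b.1 j' * C k' b.2 l')) else 0 := by
        intro t; split <;> simp
      simp only [h2]
      rw [Finset.sum_ite_eq' Finset.univ s]
      simp only [Finset.mem_univ, if_true, hG, Matrix.mul_apply, Matrix.transpose_apply,
        blockRowKron2, Matrix.of_apply]
    · rw [if_neg hss]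
      apply Finset.sum_eq_zero
      intro a _
      obtain ⟨⟨a1, t⟩, a2⟩ := a
      by_cases hts : t = s
      · subst hts
        simp [hss]
      · simp [hts]
  constructor
  · rw [hYZ, Matrix.transpose_mul, Matrix.mul_assoc, ← Matrix.mul_assoc _ (blockRowKron3Id B C),
      ← Matrix.mul_assoc]
    rw [charpoly_orth_conj _ W hW, hZ, Matrix.charpoly_reindex,
      charpoly_blockDiagonal_const, Fintype.card_fin]
  · refine ⟨1, W, by simp, hW, ?_⟩
    rw [Matrix.one_mul, hYZ]

end
end

section
/- Vertical–horizontal direct sum decomposition (Proposition 3.2, linear-algebra formulation). Fix D ≥ 1 and dimensions n_d ≥ l_d ≥ 1. Let c ∈ ℝ^{l₁⋯l_D}, let 𝒯 ⊆ ℝ^{l₁⋯l_D} be a linear subspace that is GL-saturated at c, let U_d ∈ ℝ^{n_d×l_d} have full column rank, and let U_d^⊥ ∈ ℝ^{n_d×(n_d−l_d)} be such that [U_d U_d^⊥] is an invertible n_d×n_d matrix for each d. Define the subspaces of ℝ^{l₁⋯l_D} × ℝ^{n₁×l₁} × ⋯ × ℝ^{n_D×l_D}: 𝕍 := { ( Σ_{d=1}^D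 (I⊗⋯⊗Ȧ_d⊗⋯⊗I)c, −U₁Ȧ₁, …, −U_DȦ_D ) : Ȧ_d ∈ ℝ^{l_d×l_d} } (with Ȧ_d in the d-th Kronecker slot) and ℍ := { (ċ, U₁^⊥B₁, …, U_D^⊥B_D) : ċ ∈ 𝒯, B_d ∈ ℝ^{(n_d−l_d)×l_d} }. Then 𝕍 ∩ ℍ = {0} and 𝕍 + ℍ = 𝒯 × ℝ^{n₁×l₁} × ⋯ × ℝ^{n_D×l_D}, i.e., 𝕍 ⊕ ℍ = 𝒯 × ∏_d ℝ^{n_d×l_d}. -/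
open scoped BigOperators
open Matrix

noncomputable section

/-- Iterated Kronecker product `U 1 ⊗ ⋯ ⊗ U D`, with multi-indices as rows/columns. -/
def bigKron {D : ℕ} {n l : Fin D → ℕ} (U : ∀ d, Matrix (Fin (n d)) (Fin (l d)) ℝ) :
    Matrix (∀ d, Fin (n d)) (∀ d, Fin (l d)) ℝ :=
  Matrix.of fun i j => ∏ d, U d (i d) (j d)

/-- A linear subspace `𝒯` is GL-saturated at `c`: for every mode `d` and every
`Ȧ ∈ ℝ^{l_d×l_d}`, the vector `(I⊗⋯⊗Ȧ⊗⋯⊗I)c` lies in `𝒯`. -/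
def GLSaturated {D : ℕ} {l : Fin D → ℕ} (T : Submodule ℝ ((∀ d, Fin (l d)) → ℝ))
    (c : (∀ d, Fin (l d)) → ℝ) : Prop :=
  ∀ (d : Fin D) (A : Matrix (Fin (l d)) (Fin (l d)) ℝ),
    (bigKron (Function.update (fun d' => (1 : Matrix (Fin (l d')) (Fin (l d')) ℝ)) d A)).mulVec c
      ∈ T

/-- The vertical space `𝕍`. -/
def verticalSet {D : ℕ} {n l : Fin D → ℕ}
    (c : (∀ d, Fin (l d)) → ℝ) (U : ∀ d, Matrix (Fin (n d)) (Fin (l d)) ℝ) :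
    Set (((∀ d, Fin (l d)) → ℝ) × (∀ d, Matrix (Fin (n d)) (Fin (l d)) ℝ)) :=
  {z | ∃ Adot : ∀ d, Matrix (Fin (l d)) (Fin (l d)) ℝ,
    z = (∑ d, (bigKron (Function.update
              (fun d' => (1 : Matrix (Fin (l d')) (Fin (l d')) ℝ)) d (Adot d))).mulVec c,
          fun d => -(U d * Adot d))}

/-- The horizontal space `ℍ`. -/
def horizontalSet {D : ℕ} {n l : Fin D → ℕ}
    (T : Submodule ℝ ((∀ d, Fin (l d)) → ℝ))
    (Uperp : ∀ d, Matrix (Fin (n d)) (Fin (n d - l d)) ℝ) :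
    Set (((∀ d, Fin (l d)) → ℝ) × (∀ d, Matrix (Fin (n d)) (Fin (l d)) ℝ)) :=
  {z | z.1 ∈ T ∧ ∃ B : ∀ d, Matrix (Fin (n d - l d)) (Fin (l d)) ℝ,
    z.2 = fun d => Uperp d * B d}

/-- If `M.mulVec` is injective, right multiplication by `M` kills only zero. -/
lemma aux_mul_eq_zero {m p q : Type*} [Fintype p] (M : Matrix m p ℝ)
    (h : Function.Injective M.mulVec) {N : Matrix p q ℝ} (hMN : M * N = 0) : N = 0 := by
  ext k j
  have hcol : M.mulVec (fun k => N k j) = M.mulVec 0 := by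
    funext i
    have := congrFun (congrFun hMN i) j
    simpa [Matrix.mulVec, dotProduct, Matrix.mul_apply] using this
  have := congrFun (h hcol) k
  simpa using this

/-- If `M.mulVec` is surjective, every matrix is of the form `M * N`. -/
lemma aux_exists_mul {m p q : Type*} [Fintype p] (M : Matrix m p ℝ)
    (h : Function.Surjective M.mulVec) (C : Matrix m q ℝ) : ∃ N : Matrix p q ℝ, M * N = C := by
  refine ⟨Matrix.of fun k j => Classical.choose (h (fun i => C i j)) k, ?_⟩
  ext i j
  have := congrFun (Classical.choose_spec (h (fun i => C i j))) i
  simpa [Matrix.mul_apply, Matrix.mulVec, dotProduct] using this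

lemma aux_bigKron_zero {D : ℕ} {l : Fin D → ℕ} (d : Fin D) :
    bigKron (Function.update (fun d' => (1 : Matrix (Fin (l d')) (Fin (l d')) ℝ)) d
      (0 : Matrix (Fin (l d)) (Fin (l d)) ℝ)) = 0 := by
  ext i j
  simp only [bigKron, Matrix.of_apply, Matrix.zero_apply]
  refine Finset.prod_eq_zero (Finset.mem_univ d) ?_
  simp

/-- **Proposition 3.2 (linear-algebra formulation).** If `𝒯` is GL-saturated at `c`,
the `U_d` have full column rank, and each `[U_d  U_d^⊥]` is invertible, then the vertical
space `𝕍` and the horizontal space `ℍ` satisfy `𝕍 ∩ ℍ = {0}` and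
`𝕍 + ℍ = 𝒯 × ∏_d ℝ^{n_d×l_d}`, i.e. `𝕍 ⊕ ℍ = 𝒯 × ∏_d ℝ^{n_d×l_d}`. -/
theorem vertical_horizontal_direct_sum
    {D : ℕ} (hD : 1 ≤ D) (n l : Fin D → ℕ) (hnl : ∀ d, l d ≤ n d) (hl : ∀ d, 1 ≤ l d)
    (c : (∀ d, Fin (l d)) → ℝ)
    (T : Submodule ℝ ((∀ d, Fin (l d)) → ℝ))
    (hT : GLSaturated T c)
    (U : ∀ d, Matrix (Fin (n d)) (Fin (l d)) ℝ)
    (hU : ∀ d, (U d).rank = l d)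
    (Uperp : ∀ d, Matrix (Fin (n d)) (Fin (n d - l d)) ℝ)
    (hUUperp : ∀ d, Function.Bijective (Matrix.fromCols (U d) (Uperp d)).mulVec) :
    verticalSet c U ∩ horizontalSet T Uperp = {0} ∧
    {z | ∃ v ∈ verticalSet c U, ∃ h ∈ horizontalSet T Uperp, z = v + h}
      = {z : ((∀ d, Fin (l d)) → ℝ) × (∀ d, Matrix (Fin (n d)) (Fin (l d)) ℝ) |
          z.1 ∈ T} := by
  have hVmem : ∀ Adot : ∀ d, Matrix (Fin (l d)) (Fin (l d)) ℝ,
      (∑ d, (bigKron (Function.update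
        (fun d' => (1 : Matrix (Fin (l d')) (Fin (l d')) ℝ)) d (Adot d))).mulVec c) ∈ T :=
    fun Adot => Submodule.sum_mem T fun d _ => hT d (Adot d)
  have hzero_sum : (∑ d, (bigKron (Function.update
        (fun d' => (1 : Matrix (Fin (l d')) (Fin (l d')) ℝ)) d
        (0 : Matrix (Fin (l d)) (Fin (l d)) ℝ))).mulVec c) = 0 := by
    refine Finset.sum_eq_zero fun d _ => ?_
    rw [aux_bigKron_zero, Matrix.zero_mulVec]
  constructor
  · ext z
    simp only [Set.mem_inter_iff, Set.mem_singleton_iff]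
    constructor
    · rintro ⟨⟨Adot, rfl⟩, hz1, B, hz2⟩
      have hA0 : Adot = fun d => 0 := by
        funext d
        have hcol : -(U d * Adot d) = Uperp d * B d := congrFun hz2 d
        have hzero : Matrix.fromCols (U d) (Uperp d) *
            Matrix.fromRows (Adot d) (B d) = 0 := by
          rw [Matrix.fromCols_mul_fromRows, ← hcol]
          exact add_neg_cancel _
        have hR := aux_mul_eq_zero _ (hUUperp d).1 hzero
        ext i j
        have h2 := congrFun (congrFun hR (Sum.inl i)) j
        simpa [Matrix.fromRows_apply_inl] using h2
      subst hA0
      have hsnd : (fun d => -(U d * (0 : Matrix (Fin (l d)) (Fin (l d)) ℝ)))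
          = (0 : ∀ d, Matrix (Fin (n d)) (Fin (l d)) ℝ) := by
        funext d; simp
      rw [Prod.mk_eq_zero]
      exact ⟨hzero_sum, hsnd⟩
    · rintro rfl
      refine ⟨⟨fun d => 0, ?_⟩, T.zero_mem, fun d => 0, ?_⟩
      · symm
        rw [Prod.mk_eq_zero]
        refine ⟨hzero_sum, ?_⟩
        funext d; simp
      · funext d; simp
  · ext z
    simp only [Set.mem_setOf_eq]
    constructor
    · rintro ⟨v, ⟨Adot, rfl⟩, h, ⟨hh1, B, hh2⟩, rfl⟩
      exact T.add_mem (hVmem Adot) hh1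
    · intro hz
      choose N hN using fun d => aux_exists_mul _ (hUUperp d).2 (z.2 d)
      set Adot : ∀ d, Matrix (Fin (l d)) (Fin (l d)) ℝ := fun d => -((N d).toRows₁) with hAdot
      set v1 : (∀ d, Fin (l d)) → ℝ := ∑ d, (bigKron (Function.update
              (fun d' => (1 : Matrix (Fin (l d')) (Fin (l d')) ℝ)) d (Adot d))).mulVec c with hv1
      refine ⟨(v1, fun d => -(U d * Adot d)), ⟨Adot, rfl⟩,
        (z.1 - v1, fun d => Uperp d * (N d).toRows₂),
        ⟨T.sub_mem hz (hVmem Adot), fun d => (N d).toRows₂, rfl⟩, ?_⟩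
      have h1 : z.1 = v1 + (z.1 - v1) := by ring_nf
      have h2 : z.2 = fun d => -(U d * Adot d) + Uperp d * (N d).toRows₂ := by
        funext d
        have key : U d * (N d).toRows₁ + Uperp d * (N d).toRows₂ = z.2 d := by
          rw [← Matrix.fromCols_mul_fromRows, Matrix.fromRows_toRows, hN d]
        rw [hAdot]
        simp only [Matrix.mul_neg, neg_neg]
        exact key.symm
      calc z = (z.1, z.2) := rfl
        _ = (v1 + (z.1 - v1), fun d => -(U d * Adot d) + Uperp d * (N d).toRows₂) := by
              rw [← h1, ← h2]
        _ = (v1, fun d => -(U d * Adot d)) +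
              (z.1 - v1, fun d => Uperp d * (N d).toRows₂) := by
              rw [Prod.mk_add_mk]
              refine congrArg (Prod.mk _) ?_
              funext d
              rfl

end
end

section
/- Injectivity of the Terracini parametrization (immersion content of Proposition 3.3). Fix D ≥ 1 and dimensions n_d ≥ l_d ≥ 1. Let C ∈ ℝ^{l₁×⋯×l_D} be a tensor whose every flattening C_(d) has full row rank l_d, with vectorization c; let U_d ∈ ℝ^{n_d×l_d} have full column rank for d = 1,…,D; and let 𝒯 ⊆ ℝ^{l₁⋯l_D} be any linear subspace. Then the linear map Ψ(ċ, U̇₁, …, U̇_D) := (U₁⊗⋯⊗U_D)ċ + Σ_{d=1}^D (U₁⊗⋯⊗U_{d−1}⊗U̇_d⊗U_{d+1}⊗⋯⊗U_D)c, restricted to the subspace { (ċ, U̇₁, …, U̇_D) : ċ ∈ 𝒯, U̇_d ∈ ℝ^{n_d×l_d}, U_dᵀU̇_d = 0 for all d }, is injective. Moreover, the images of the D+1 coordinate blocks (the ċ-block and each U̇_d-block) are pairwise orthogonal subspaces of ℝ^{n₁⋯n_D}. -/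
open scoped BigOperators
open Matrix

noncomputable section

/-- Reassemble a full multi-index from a value `j` in slot `d` and a complementary index `i`. -/
def assemble {D : ℕ} {l : Fin D → ℕ} (d : Fin D) (j : Fin (l d))
    (i : ∀ d' : {x : Fin D // x ≠ d}, Fin (l d'.1)) : ∀ d', Fin (l d') :=
  fun d' => if h : d' = d then Fin.cast (congrArg l h.symm) j else i ⟨d', h⟩

/-- The `d`-th flattening `C_(d)` of a tensor `c`, an `l d × ∏_{d' ≠ d} l d'` matrix. -/
def flatten {D : ℕ} {l : Fin D → ℕ} (c : (∀ d, Fin (l d)) → ℝ) (d : Fin D) :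
    Matrix (Fin (l d)) (∀ d' : {x : Fin D // x ≠ d}, Fin (l d'.1)) ℝ :=
  Matrix.of fun j i => c (assemble d j i)

/-- The Terracini parametrization
`Ψ(ċ, U̇₁, …, U̇_D) = (U₁⊗⋯⊗U_D)ċ + Σ_d (U₁⊗⋯⊗U̇_d⊗⋯⊗U_D)c`. -/
def terraciniParam {D : ℕ} {n l : Fin D → ℕ}
    (c : (∀ d, Fin (l d)) → ℝ) (U : ∀ d, Matrix (Fin (n d)) (Fin (l d)) ℝ)
    (z : ((∀ d, Fin (l d)) → ℝ) × (∀ d, Matrix (Fin (n d)) (Fin (l d)) ℝ)) :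
    (∀ d, Fin (n d)) → ℝ :=
  (bigKron U).mulVec z.1 + ∑ d, (bigKron (Function.update U d (z.2 d))).mulVec c

namespace Helper
variable {D : ℕ} {m n l : Fin D → ℕ}

lemma bigKron_mul (A : ∀ d, Matrix (Fin (m d)) (Fin (n d)) ℝ)
    (B : ∀ d, Matrix (Fin (n d)) (Fin (l d)) ℝ) :
    bigKron A * bigKron B = bigKron (fun d => A d * B d) := by
  ext i k
  simp only [bigKron, Matrix.mul_apply, Matrix.of_apply]
  rw [Finset.prod_univ_sum]
  exact Finset.sum_congr rfl fun j _ => (Finset.prod_mul_distrib).symm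

lemma bigKron_one : bigKron (fun d => (1 : Matrix (Fin (l d)) (Fin (l d)) ℝ)) = 1 := by
  ext i j
  simp only [bigKron, Matrix.of_apply, Matrix.one_apply]
  by_cases h : i = j
  · subst h; simp
  · rw [if_neg h]
    obtain ⟨d, hd⟩ : ∃ d, i d ≠ j d := by
      by_contra hc; push_neg at hc; exact h (funext hc)
    exact Finset.prod_eq_zero (Finset.mem_univ d) (by simp [Matrix.one_apply, hd])

lemma bigKron_zero {A : ∀ d, Matrix (Fin (n d)) (Fin (l d)) ℝ} (d₀ : Fin D)
    (h : A d₀ = 0) : bigKron A = 0 := by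
  ext i j
  exact Finset.prod_eq_zero (Finset.mem_univ d₀) (by simp [h])

lemma bigKron_transpose (A : ∀ d, Matrix (Fin (n d)) (Fin (l d)) ℝ) :
    (bigKron A)ᵀ = bigKron (fun d => (A d)ᵀ) := rfl

lemma bigKron_orth {A : ∀ d, Matrix (Fin (m d)) (Fin (n d)) ℝ}
    {B : ∀ d, Matrix (Fin (m d)) (Fin (l d)) ℝ} (d₀ : Fin D)
    (h : (A d₀)ᵀ * B d₀ = 0) (x : (∀ d, Fin (n d)) → ℝ) (y : (∀ d, Fin (l d)) → ℝ) :
    ∑ a, (bigKron A).mulVec x a * (bigKron B).mulVec y a = 0 := by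
  have h1 : ((bigKron A)ᵀ * bigKron B) = 0 := by
    rw [bigKron_transpose, bigKron_mul]
    exact bigKron_zero d₀ h
  have : ∑ a, (bigKron A).mulVec x a * (bigKron B).mulVec y a
      = (bigKron A).mulVec x ⬝ᵥ (bigKron B).mulVec y := rfl
  rw [this, Matrix.dotProduct_mulVec, ← Matrix.vecMul_transpose,
    Matrix.vecMul_vecMul, h1]
  simp

lemma exists_right_inv {k : ℕ} {J : Type*} [Fintype J] [DecidableEq J]
    (A : Matrix (Fin k) J ℝ) (h : A.rank = k) : ∃ B : Matrix J (Fin k) ℝ, A * B = (1 : Matrix (Fin k) (Fin k) ℝ) := by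
  rw [← Matrix.mulVec_surjective_iff_exists_right_inverse]
  have hr : LinearMap.range A.mulVecLin = ⊤ := by
    apply Submodule.eq_top_of_finrank_eq
    rw [← Matrix.rank, h, Module.finrank_fin_fun]
  intro y
  obtain ⟨x, hx⟩ := LinearMap.range_eq_top.mp hr y
  exact ⟨x, hx⟩

lemma exists_left_inv {k k' : ℕ} (U : Matrix (Fin k) (Fin k') ℝ) (h : U.rank = k') :
    ∃ V : Matrix (Fin k') (Fin k) ℝ, V * U = (1 : Matrix (Fin k') (Fin k') ℝ) := by
  obtain ⟨B, hB⟩ := exists_right_inv Uᵀ (by rw [Matrix.rank_transpose, h])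
  refine ⟨Bᵀ, ?_⟩
  have := congrArg Matrix.transpose hB
  rwa [Matrix.transpose_mul, Matrix.transpose_transpose, Matrix.transpose_one] at this

lemma assemble_same (d : Fin D) (j : Fin (l d)) (b : ∀ d' : {x : Fin D // x ≠ d}, Fin (l d'.1)) :
    assemble d j b d = j := by
  simp only [assemble, dif_pos rfl]
  exact Fin.ext (by simp)

lemma assemble_ne (d : Fin D) (j : Fin (l d)) (b : ∀ d' : {x : Fin D // x ≠ d}, Fin (l d'.1))
    (d'' : {x : Fin D // x ≠ d}) : assemble d j b d''.1 = b d'' := by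
  simp only [assemble, dif_neg d''.2]

def asmEquiv (d : Fin D) :
    (Fin (l d) × ∀ d' : {x : Fin D // x ≠ d}, Fin (l d'.1)) ≃ (∀ d', Fin (l d')) where
  toFun p := assemble d p.1 p.2
  invFun a := (a d, fun d'' => a d''.1)
  left_inv p := by
    obtain ⟨j, b⟩ := p
    exact Prod.ext (assemble_same d j b) (funext fun d'' => assemble_ne d j b d'')
  right_inv a := by
    funext d'
    simp only [assemble]
    split
    · rename_i h; subst h; exact Fin.ext (by simp)
    · rfl

lemma prod_split {M : Type*} [CommMonoid M] {ι : Type*} [Fintype ι] [DecidableEq ι]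
    (d : ι) (g : ι → M) :
    ∏ d', g d' = g d * ∏ d'' : {x : ι // x ≠ d}, g d''.1 := by
  rw [← Finset.mul_prod_erase Finset.univ g (Finset.mem_univ d)]
  congr 1
  exact Finset.prod_subtype (Finset.univ.erase d) (p := fun x => x ≠ d)
    (fun x => by simp [Finset.mem_erase]) g

lemma prod_ite_one {ι : Type*} [Fintype ι] (p : ι → Prop) [DecidablePred p] :
    (∏ x, if p x then (1 : ℝ) else 0) = if ∀ x, p x then 1 else 0 := by
  by_cases h : ∀ x, p x
  · rw [if_pos h]; exact Finset.prod_eq_one fun x _ => if_pos (h x)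
  · rw [if_neg h]
    push_neg at h
    obtain ⟨x, hx⟩ := h
    exact Finset.prod_eq_zero (Finset.mem_univ x) (if_neg hx)

lemma kill (c : (∀ d, Fin (l d)) → ℝ) (d : Fin D)
    (U : ∀ d', Matrix (Fin (n d')) (Fin (l d')) ℝ)
    (V : ∀ d', Matrix (Fin (l d')) (Fin (n d')) ℝ)
    (hV : ∀ d', V d' * U d' = 1)
    (R : Matrix (∀ d'' : {x : Fin D // x ≠ d}, Fin (l d''.1)) (Fin (l d)) ℝ)
    (hR : flatten c d * R = 1)
    (W : Matrix (Fin (n d)) (Fin (l d)) ℝ)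
    (h0 : (bigKron (Function.update U d W)).mulVec c = 0) : W = 0 := by
  classical
  set M := Function.update U d W with hM
  have key : W * flatten c d = 0 := by
    ext r i
    have expand : ∀ (b : ∀ d'' : {x : Fin D // x ≠ d}, Fin (n d''.1)) (j : ∀ d', Fin (l d')),
        (∏ d', M d' (assemble d r b d') (j d'))
          = W r (j d) * ∏ d'' : {x : Fin D // x ≠ d}, U d''.1 (b d'') (j d''.1) := by
      intro b j
      rw [prod_split d (fun d' => M d' (assemble d r b d') (j d'))]
      congr 1
      · rw [assemble_same]
        simp [hM]
      · exact Finset.prod_congr rfl fun d'' _ => by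
          rw [assemble_ne, hM, Function.update_of_ne d''.2]
    have zero : ∑ b : (∀ d'' : {x : Fin D // x ≠ d}, Fin (n d''.1)),
        (∏ d'' : {x : Fin D // x ≠ d}, V d''.1 (i d'') (b d''))
          * ((bigKron M).mulVec c (assemble d r b)) = 0 :=
      Finset.sum_eq_zero fun b _ => by rw [h0]; simp
    have step : ∑ b : (∀ d'' : {x : Fin D // x ≠ d}, Fin (n d''.1)),
        (∏ d'' : {x : Fin D // x ≠ d}, V d''.1 (i d'') (b d''))
          * ((bigKron M).mulVec c (assemble d r b))
        = ∑ jd, W r jd * c (assemble d jd i) := by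
      calc ∑ b : (∀ d'' : {x : Fin D // x ≠ d}, Fin (n d''.1)),
              (∏ d'' : {x : Fin D // x ≠ d}, V d''.1 (i d'') (b d''))
                * ((bigKron M).mulVec c (assemble d r b))
          = ∑ b : (∀ d'' : {x : Fin D // x ≠ d}, Fin (n d''.1)),
              ∑ j : (∀ d', Fin (l d')),
              (∏ d'' : {x : Fin D // x ≠ d}, V d''.1 (i d'') (b d''))
                * ((∏ d', M d' (assemble d r b d') (j d')) * c j) := by
            simp only [Matrix.mulVec, dotProduct, bigKron, Matrix.of_apply, Finset.mul_sum]
        _ = ∑ j : (∀ d', Fin (l d')), ∑ b : (∀ d'' : {x : Fin D // x ≠ d}, Fin (n d''.1)),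
              (∏ d'' : {x : Fin D // x ≠ d}, V d''.1 (i d'') (b d''))
                * ((W r (j d) * ∏ d'' : {x : Fin D // x ≠ d}, U d''.1 (b d'') (j d''.1)) * c j) := by
            rw [Finset.sum_comm]
            exact Finset.sum_congr rfl fun j _ => Finset.sum_congr rfl fun b _ => by
              rw [expand b j]
        _ = ∑ j : (∀ d', Fin (l d')), (W r (j d) * c j)
              * ∑ b : (∀ d'' : {x : Fin D // x ≠ d}, Fin (n d''.1)),
                ∏ d'' : {x : Fin D // x ≠ d},
                  (V d''.1 (i d'') (b d'') * U d''.1 (b d'') (j d''.1)) := by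
            refine Finset.sum_congr rfl fun j _ => ?_
            rw [Finset.mul_sum]
            refine Finset.sum_congr rfl fun b _ => ?_
            rw [Finset.prod_mul_distrib]
            ring
        _ = ∑ j : (∀ d', Fin (l d')), (W r (j d) * c j)
              * ∏ d'' : {x : Fin D // x ≠ d}, (V d''.1 * U d''.1) (i d'') (j d''.1) := by
            refine Finset.sum_congr rfl fun j _ => ?_
            congr 1
            rw [show (∏ d'' : {x : Fin D // x ≠ d}, (V d''.1 * U d''.1) (i d'') (j d''.1))
                = ∏ d'' : {x : Fin D // x ≠ d}, ∑ x, V d''.1 (i d'') x * U d''.1 x (j d''.1)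
              from Finset.prod_congr rfl fun d'' _ => Matrix.mul_apply]
            rw [Finset.prod_univ_sum]
            simp
        _ = ∑ j : (∀ d', Fin (l d')), (W r (j d) * c j)
              * (if ∀ d'' : {x : Fin D // x ≠ d}, i d'' = j d''.1 then 1 else 0) := by
            refine Finset.sum_congr rfl fun j _ => ?_
            congr 1
            rw [← prod_ite_one (fun d'' : {x : Fin D // x ≠ d} => i d'' = j d''.1)]
            exact Finset.prod_congr rfl fun d'' _ => by rw [hV d''.1, Matrix.one_apply]
        _ = ∑ p : Fin (l d) × (∀ d'' : {x : Fin D // x ≠ d}, Fin (l d''.1)),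
              (W r p.1 * c (assemble d p.1 p.2))
                * (if ∀ d'' : {x : Fin D // x ≠ d}, i d'' = p.2 d'' then 1 else 0) := by
            refine (Fintype.sum_equiv (asmEquiv d) _ _ fun p => ?_).symm
            obtain ⟨jd, jb⟩ := p
            simp only [asmEquiv, Equiv.coe_fn_mk]
            rw [assemble_same]
            congr 1
            congr 1
            refine propext ⟨fun h d'' => (h d'').trans (assemble_ne d jd jb d'').symm,
              fun h d'' => (h d'').trans (assemble_ne d jd jb d'')⟩
        _ = ∑ jd, ∑ jb : (∀ d'' : {x : Fin D // x ≠ d}, Fin (l d''.1)),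
              (W r jd * c (assemble d jd jb))
                * (if ∀ d'' : {x : Fin D // x ≠ d}, i d'' = jb d'' then 1 else 0) :=
            Fintype.sum_prod_type _
        _ = ∑ jd, W r jd * c (assemble d jd i) := by
            refine Finset.sum_congr rfl fun jd _ => ?_
            calc ∑ jb : (∀ d'' : {x : Fin D // x ≠ d}, Fin (l d''.1)),
                  (W r jd * c (assemble d jd jb))
                    * (if ∀ d'' : {x : Fin D // x ≠ d}, i d'' = jb d'' then 1 else 0)
                = ∑ jb : (∀ d'' : {x : Fin D // x ≠ d}, Fin (l d''.1)),
                  (if i = jb then W r jd * c (assemble d jd jb) else 0) := by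
                  refine Finset.sum_congr rfl fun jb _ => ?_
                  by_cases h : i = jb
                  · subst h; simp
                  · rw [if_neg h, if_neg (fun hall => h (funext hall)), mul_zero]
              _ = W r jd * c (assemble d jd i) := by rw [Finset.sum_ite_eq]; simp
    show (W * flatten c d) r i = (0 : Matrix _ _ ℝ) r i
    rw [Matrix.mul_apply, Matrix.zero_apply]
    calc ∑ jd, W r jd * flatten c d jd i = ∑ jd, W r jd * c (assemble d jd i) := rfl
      _ = 0 := by rw [← step, zero]
  calc W = W * (flatten c d * R) := by rw [hR, Matrix.mul_one]
    _ = (W * flatten c d) * R := by rw [Matrix.mul_assoc]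
    _ = 0 := by rw [key, Matrix.zero_mul]


end Helper

open Helper

/-- **Immersion content of Proposition 3.3.** If every flattening of `C` has full row
rank and every `U_d` has full column rank, then `Ψ` is injective on the subspace
`{(ċ, U̇₁, …, U̇_D) : ċ ∈ 𝒯, U_dᵀU̇_d = 0}`, and the images of the `D+1` coordinate
blocks are pairwise orthogonal. -/
theorem terracini_param_injective
    {D : ℕ} (hD : 1 ≤ D) (n l : Fin D → ℕ) (hnl : ∀ d, l d ≤ n d)
    (c : (∀ d, Fin (l d)) → ℝ)
    (hc : ∀ d, (flatten c d).rank = l d)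
    (U : ∀ d, Matrix (Fin (n d)) (Fin (l d)) ℝ)
    (hU : ∀ d, (U d).rank = l d)
    (T : Submodule ℝ ((∀ d, Fin (l d)) → ℝ)) :
    -- injectivity on the constrained subspace
    (∀ z z' : ((∀ d, Fin (l d)) → ℝ) × (∀ d, Matrix (Fin (n d)) (Fin (l d)) ℝ),
      z.1 ∈ T → (∀ d, (U d)ᵀ * z.2 d = 0) →
      z'.1 ∈ T → (∀ d, (U d)ᵀ * z'.2 d = 0) →
      terraciniParam c U z = terraciniParam c U z' → z = z') ∧
    -- the `ċ`-block is orthogonal to every `U̇_d`-block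
    (∀ (cdot : (∀ d, Fin (l d)) → ℝ), cdot ∈ T →
      ∀ (d : Fin D) (Udot : Matrix (Fin (n d)) (Fin (l d)) ℝ), (U d)ᵀ * Udot = 0 →
        ∑ a, (bigKron U).mulVec cdot a
            * (bigKron (Function.update U d Udot)).mulVec c a = 0) ∧
    -- distinct `U̇_d`-blocks are pairwise orthogonal
    (∀ (d d' : Fin D), d ≠ d' →
      ∀ (Udot : Matrix (Fin (n d)) (Fin (l d)) ℝ), (U d)ᵀ * Udot = 0 →
      ∀ (Udot' : Matrix (Fin (n d')) (Fin (l d')) ℝ), (U d')ᵀ * Udot' = 0 →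
        ∑ a, (bigKron (Function.update U d Udot)).mulVec c a
            * (bigKron (Function.update U d' Udot')).mulVec c a = 0) := by
  classical
  -- left inverses of the U d
  choose V hV using fun d => exists_left_inv (U d) (hU d)
  have honekron : bigKron V * bigKron U = 1 := by
    rw [bigKron_mul, show (fun d => V d * U d)
      = fun d => (1 : Matrix (Fin (l d)) (Fin (l d)) ℝ) from funext hV]
    exact bigKron_one
  -- orthogonality of the c-block with a U̇-block
  have orth1 : ∀ (x : (∀ d, Fin (l d)) → ℝ) (d : Fin D)
      (Udot : Matrix (Fin (n d)) (Fin (l d)) ℝ), (U d)ᵀ * Udot = 0 →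
      ∑ a, (bigKron U).mulVec x a
        * (bigKron (Function.update U d Udot)).mulVec c a = 0 := by
    intro x d Udot hUd
    refine bigKron_orth d ?_ x c
    rw [Function.update_self]
    exact hUd
  -- orthogonality of two distinct U̇-blocks
  have orth2 : ∀ (d d' : Fin D), d ≠ d' →
      ∀ (Udot : Matrix (Fin (n d)) (Fin (l d)) ℝ), (U d)ᵀ * Udot = 0 →
      ∀ (Udot' : Matrix (Fin (n d')) (Fin (l d')) ℝ), (U d')ᵀ * Udot' = 0 →
      ∑ a, (bigKron (Function.update U d Udot)).mulVec c a
        * (bigKron (Function.update U d' Udot')).mulVec c a = 0 := by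
    intro d d' hdd' Udot hUd Udot' hUd'
    refine bigKron_orth d ?_ c c
    rw [Function.update_self, Function.update_of_ne hdd']
    have := congrArg Matrix.transpose hUd
    rwa [Matrix.transpose_mul, Matrix.transpose_transpose, Matrix.transpose_zero] at this
  refine ⟨?_, fun cdot _ d Udot h => orth1 cdot d Udot h, orth2⟩
  intro z z' hz1 hz2 hz1' hz2' hΨ
  set w1 := z.1 - z'.1 with hw1def
  set w2 : ∀ d, Matrix (Fin (n d)) (Fin (l d)) ℝ := fun d => z.2 d - z'.2 d with hw2def
  have hw2c : ∀ d, (U d)ᵀ * w2 d = 0 := fun d => by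
    rw [hw2def, Matrix.mul_sub, hz2 d, hz2' d, sub_zero]
  -- the difference identity
  have hw : (bigKron U).mulVec w1
      + ∑ d, (bigKron (Function.update U d (w2 d))).mulVec c = 0 := by
    have hupd : ∀ d, bigKron (Function.update U d (w2 d))
        = bigKron (Function.update U d (z.2 d)) - bigKron (Function.update U d (z'.2 d)) := by
      intro d
      have e : ∀ (Z : Matrix (Fin (n d)) (Fin (l d)) ℝ) (i : ∀ d, Fin (n d)) (j : ∀ d, Fin (l d)),
          bigKron (Function.update U d Z) i j
            = Z (i d) (j d) * ∏ d'' : {x : Fin D // x ≠ d}, U d''.1 (i d''.1) (j d''.1) := by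
        intro Z i j
        simp only [bigKron, Matrix.of_apply]
        rw [prod_split d]
        congr 1
        · rw [Function.update_self]
        · exact Finset.prod_congr rfl fun d'' _ => by rw [Function.update_of_ne d''.2]
      ext i j
      rw [Matrix.sub_apply, e, e, e, hw2def]
      simp [Matrix.sub_apply, sub_mul]
    have expand : (bigKron U).mulVec w1
        + ∑ d, (bigKron (Function.update U d (w2 d))).mulVec c
        = terraciniParam c U z - terraciniParam c U z' := by
      simp only [terraciniParam, hw1def, Matrix.mulVec_sub]
      have : ∀ d, (bigKron (Function.update U d (w2 d))).mulVec c
          = (bigKron (Function.update U d (z.2 d))).mulVec c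
            - (bigKron (Function.update U d (z'.2 d))).mulVec c := by
        intro d
        rw [hupd d, Matrix.sub_mulVec]
      rw [Finset.sum_congr rfl fun d _ => this d, Finset.sum_sub_distrib]
      abel
    rw [expand, hΨ, sub_self]
  -- name the blocks
  set F0 : (∀ d, Fin (n d)) → ℝ := (bigKron U).mulVec w1 with hF0def
  set F : ∀ _ : Fin D, (∀ d, Fin (n d)) → ℝ
    := fun d => (bigKron (Function.update U d (w2 d))).mulVec c with hFdef
  have hsum : F0 + ∑ d, F d = 0 := hw
  have o1 : ∀ d, ∑ a, F0 a * F d a = 0 := fun d => orth1 w1 d (w2 d) (hw2c d)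
  have o2 : ∀ d e, d ≠ e → ∑ a, F d a * F e a = 0 :=
    fun d e hde => orth2 d e hde (w2 d) (hw2c d) (w2 e) (hw2c e)
  have sq_zero : ∀ (G : (∀ d, Fin (n d)) → ℝ), (∑ a, G a * G a) = 0 → G = 0 := by
    intro G hG
    funext a
    have := (Finset.sum_eq_zero_iff_of_nonneg
      (fun a _ => mul_self_nonneg (G a))).mp hG a (Finset.mem_univ a)
    exact mul_self_eq_zero.mp this
  have inner_zero : ∀ (G : (∀ d, Fin (n d)) → ℝ),
      (∑ a, G a * (F0 + ∑ d, F d) a) = 0 := by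
    intro G
    rw [hsum]
    simp
  have expand_inner : ∀ (G : (∀ d, Fin (n d)) → ℝ),
      ∑ a, G a * (F0 + ∑ d, F d) a
        = (∑ a, G a * F0 a) + ∑ d, ∑ a, G a * F d a := by
    intro G
    rw [Finset.sum_comm (s := Finset.univ) (t := Finset.univ)]
    rw [← Finset.sum_add_distrib]
    refine Finset.sum_congr rfl fun a _ => ?_
    simp [Finset.mul_sum, mul_add]
  -- the c-block vanishes
  have hF0 : F0 = 0 := by
    apply sq_zero
    have := inner_zero F0
    rw [expand_inner F0, Finset.sum_eq_zero fun d _ => o1 d, add_zero] at this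
    exact this
  -- each U̇-block vanishes
  have hFd : ∀ d, F d = 0 := by
    intro d
    apply sq_zero
    have := inner_zero (F d)
    rw [expand_inner (F d)] at this
    rw [show (∑ a, F d a * F0 a) = 0 by
        rw [show (∑ a, F d a * F0 a) = ∑ a, F0 a * F d a from
          Finset.sum_congr rfl fun a _ => mul_comm _ _]
        exact o1 d] at this
    rw [Finset.sum_eq_single d (fun e _ hed => o2 d e fun h => hed h.symm)
      (fun h => absurd (Finset.mem_univ d) h), zero_add] at this
    exact this
  -- conclude w1 = 0
  have hw1 : w1 = 0 := by
    have h0 : (bigKron U).mulVec w1 = 0 := hF0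
    calc w1 = (1 : Matrix (∀ d, Fin (l d)) (∀ d, Fin (l d)) ℝ).mulVec w1 := by
          rw [Matrix.one_mulVec]
      _ = (bigKron V * bigKron U).mulVec w1 := by rw [honekron]
      _ = (bigKron V).mulVec ((bigKron U).mulVec w1) := by rw [Matrix.mulVec_mulVec]
      _ = 0 := by rw [h0, Matrix.mulVec_zero]
  -- conclude w2 d = 0
  have hw2 : ∀ d, w2 d = 0 := by
    intro d
    obtain ⟨R, hR⟩ := exists_right_inv (flatten c d) (hc d)
    exact kill c d U V hV R hR (w2 d) (hFd d)
  -- finish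
  have h1 : z.1 = z'.1 := sub_eq_zero.mp hw1
  have h2 : z.2 = z'.2 := funext fun d => sub_eq_zero.mp (hw2 d)
  exact Prod.ext h1 h2

end
end
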